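/- arXiv:1207.1238 — 5 statements merged into one kernel-verified Lean document; each statement's English description precedes it below -/
import Mathlib

section
/- Let d_1, …, d_n be positive integers (n ≥ 2), let D = ∑_{i=1}^n d_i, and let s be an integer with 0 < s < D. Set p_i = d_i/D, q = s/D, P = (p_1, …, p_n), and Q = (q, 1−q). Then there exists a subset J ⊆ {1, …, n} with ∑_{j∈J} d_j = s if and only if there exists a matrix S ∈ C(P,Q) with H(S) = H(P). -/
open Finset Real

/-- A probability vector: nonnegative entries summing to 1. -/
def IsProbVec {n : ℕ} (P : Fin n → ℝ) : Prop :=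
  (∀ i, 0 ≤ P i) ∧ ∑ i, P i = 1

/-- Membership in the transportation polytope `C(P,Q)`: nonnegative entries,
row sums `P`, column sums `Q`. -/
def MemCoupling {n m : ℕ} (P : Fin n → ℝ) (Q : Fin m → ℝ)
    (S : Fin n → Fin m → ℝ) : Prop :=
  (∀ i j, 0 ≤ S i j) ∧ (∀ i, ∑ j, S i j = P i) ∧ (∀ j, ∑ i, S i j = Q j)

/-- Shannon entropy of a vector (natural log, `0 log 0 = 0` since `Real.log 0 = 0`). -/
noncomputable def vecEnt {n : ℕ} (P : Fin n → ℝ) : ℝ :=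
  -∑ i, P i * Real.log (P i)

/-- Joint (Shannon) entropy of a matrix. -/
noncomputable def matEnt {n m : ℕ} (S : Fin n → Fin m → ℝ) : ℝ :=
  -∑ i, ∑ j, S i j * Real.log (S i j)

/-- reduction of Subset Sum to Entropy Minimization over a
transportation polytope with marginals `P = (dᵢ/D)` and `Q = (s/D, 1 - s/D)`. -/
theorem subset_sum_iff_entropy_min (n : ℕ) (hn : 2 ≤ n) (d : Fin n → ℕ)
    (hd : ∀ i, 0 < d i) (s : ℕ) (hs0 : 0 < s) (hsD : s < ∑ i, d i) :
    (∃ J : Finset (Fin n), ∑ j ∈ J, d j = s) ↔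
    (∃ S : Fin n → Fin 2 → ℝ,
      MemCoupling (fun i => (d i : ℝ) / ((∑ i, d i : ℕ) : ℝ))
        ![(s : ℝ) / ((∑ i, d i : ℕ) : ℝ), 1 - (s : ℝ) / ((∑ i, d i : ℕ) : ℝ)] S ∧
      matEnt S = vecEnt (fun i => (d i : ℝ) / ((∑ i, d i : ℕ) : ℝ))) := by
  classical
  have hD : 0 < ∑ i, d i := hs0.trans hsD
  have hDR : (0:ℝ) < ((∑ i, d i : ℕ) : ℝ) := by exact_mod_cast hD
  set Dr : ℝ := ((∑ i, d i : ℕ) : ℝ) with hDr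
  set p : Fin n → ℝ := fun i => (d i : ℝ) / Dr with hpdef
  have hp : ∀ i, 0 < p i := fun i => div_pos (by exact_mod_cast hd i) hDR
  have hsumd : ∀ J : Finset (Fin n), ∑ i ∈ J, p i = ((∑ i ∈ J, d i : ℕ) : ℝ) / Dr := by
    intro J
    simp only [hpdef]
    rw [← Finset.sum_div, Nat.cast_sum]
  constructor
  · rintro ⟨J, hJ⟩
    refine ⟨fun i j => if (i ∈ J ↔ j = 0) then p i else 0, ⟨?_, ?_, ?_⟩, ?_⟩
    · intro i j
      dsimp only
      split
      · exact (hp i).le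
      · rfl
    · intro i
      by_cases h : i ∈ J <;> simp [Fin.sum_univ_two, h]
    · intro j
      fin_cases j
      · simp only [Fin.mk_zero, Matrix.cons_val_zero, eq_self_iff_true, iff_true]
        rw [Finset.sum_ite_mem, Finset.univ_inter, hsumd J, hJ]
      · simp only [Fin.mk_one, Matrix.cons_val_one, Matrix.head_cons]
        have heq : ∀ i ∈ (Finset.univ : Finset (Fin n)),
            (if (i ∈ J ↔ (1 : Fin 2) = 0) then p i else 0)
            = if i ∈ Jᶜ then p i else 0 := by intro i _; simp
        rw [Finset.sum_congr rfl heq, Finset.sum_ite_mem, Finset.univ_inter]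
        have htot : ∑ i, p i = 1 := by
          rw [hsumd Finset.univ]
          exact div_self hDR.ne'
        have hcompl : ∑ i ∈ Jᶜ, p i = (∑ i, p i) - ∑ i ∈ J, p i := by
          rw [eq_sub_iff_add_eq, Finset.sum_compl_add_sum]
        rw [hcompl, htot, hsumd J, hJ]; rfl
    · unfold matEnt vecEnt
      congr 1
      refine Finset.sum_congr rfl fun i _ => ?_
      by_cases h : i ∈ J <;> simp [Fin.sum_univ_two, h]
  · rintro ⟨S, ⟨hnn, hrow, hcol⟩, hent⟩
    have hle : ∀ i j, S i j ≤ p i := by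
      intro i j
      have h := hrow i
      rw [Fin.sum_univ_two] at h
      fin_cases j
      · have := hnn i 1; simp only [Fin.mk_zero]; linarith
      · have := hnn i 0; simp only [Fin.mk_one]; linarith
    have hfnn : ∀ i j, 0 ≤ S i j * (Real.log (p i) - Real.log (S i j)) := by
      intro i j
      rcases eq_or_lt_of_le (hnn i j) with h | h
      · simp [← h]
      · have hlog := Real.log_le_log h (hle i j)
        nlinarith
    have hsum0 : ∑ i, ∑ j, S i j * (Real.log (p i) - Real.log (S i j)) = 0 := by
      have h1 : ∑ i, ∑ j, S i j * Real.log (S i j) = ∑ i, p i * Real.log (p i) := by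
        have h := hent
        unfold matEnt vecEnt at h
        exact neg_injective h
      have h2 : ∀ i, ∑ j, S i j * Real.log (p i) = p i * Real.log (p i) := by
        intro i; rw [← Finset.sum_mul, hrow i]
      calc ∑ i, ∑ j, S i j * (Real.log (p i) - Real.log (S i j))
          = ∑ i, ((∑ j, S i j * Real.log (p i)) - ∑ j, S i j * Real.log (S i j)) := by
            refine Finset.sum_congr rfl fun i _ => ?_
            rw [← Finset.sum_sub_distrib]
            exact Finset.sum_congr rfl fun j _ => by ring
        _ = (∑ i, p i * Real.log (p i)) - ∑ i, ∑ j, S i j * Real.log (S i j) := by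
            rw [Finset.sum_sub_distrib]
            congr 1
            exact Finset.sum_congr rfl fun i _ => h2 i
        _ = 0 := by rw [h1, sub_self]
    have hzero : ∀ i j, S i j * (Real.log (p i) - Real.log (S i j)) = 0 := by
      have h1 := (Finset.sum_eq_zero_iff_of_nonneg
        (fun i _ => Finset.sum_nonneg fun j _ => hfnn i j)).mp hsum0
      intro i j
      have h2 := (Finset.sum_eq_zero_iff_of_nonneg
        (fun j _ => hfnn i j)).mp (h1 i (Finset.mem_univ i))
      exact h2 j (Finset.mem_univ j)
    have hcases : ∀ i j, S i j = 0 ∨ S i j = p i := by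
      intro i j
      rcases eq_or_lt_of_le (hnn i j) with h' | h'
      · exact Or.inl h'.symm
      · right
        rcases mul_eq_zero.mp (hzero i j) with h | h
        · exact absurd h h'.ne'
        · have hlogeq : Real.log (S i j) = Real.log (p i) := by linarith [sub_eq_zero.mp h]
          exact Real.log_injOn_pos (Set.mem_Ioi.mpr h') (Set.mem_Ioi.mpr (hp i)) hlogeq
    set J : Finset (Fin n) := Finset.univ.filter (fun i => S i 0 ≠ 0) with hJdef
    refine ⟨J, ?_⟩
    have hJ0 : ∀ i, (if i ∈ J then p i else 0) = S i 0 := by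
      intro i
      by_cases h : i ∈ J
      · simp only [h, if_true]
        rcases hcases i 0 with h0 | h0
        · exact absurd h0 (by simpa [hJdef] using h)
        · exact h0.symm
      · simp only [h, if_false]
        by_contra hne
        exact h (by simpa [hJdef] using Ne.symm hne)
    have hc0 := hcol 0
    simp only [Matrix.cons_val_zero] at hc0
    have hkey : ∑ i ∈ J, p i = (s : ℝ) / Dr := by
      calc ∑ i ∈ J, p i = ∑ i, (if i ∈ J then p i else 0) := by
            rw [Finset.sum_ite_mem, Finset.univ_inter]
        _ = ∑ i, S i 0 := Finset.sum_congr rfl fun i _ => hJ0 i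
        _ = (s : ℝ) / Dr := hc0
    rw [hsumd J] at hkey
    have hfin : ((∑ i ∈ J, d i : ℕ) : ℝ) = (s : ℝ) := by
      field_simp at hkey
      exact_mod_cast hkey
    exact_mod_cast hfin
end

section
/- Let P and Q be finitely supported probability distributions on ℕ. Then Δ̲(P,Q) = H(P) − H(Q) if and only if there exists S ∈ C(P,Q) such that for every i there is at most one j with S(i,j) ≠ 0 (i.e., a coupling in which the second coordinate is a deterministic function of the first). -/
open Real

/-- A finitely supported probability distribution on `ℕ`. -/
def IsFinProb (P : ℕ → ℝ) : Prop :=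
  (∀ i, 0 ≤ P i) ∧ (Function.support P).Finite ∧ ∑ᶠ i, P i = 1

/-- Membership in the set `C(P,Q)` of finitely supported couplings of `P` and `Q`. -/
def MemCouplingN (P Q : ℕ → ℝ) (S : ℕ × ℕ → ℝ) : Prop :=
  (∀ x, 0 ≤ S x) ∧ (Function.support S).Finite ∧
  (∀ i, ∑ᶠ j, S (i, j) = P i) ∧ (∀ j, ∑ᶠ i, S (i, j) = Q j)

/-- Shannon entropy of a distribution on `ℕ` (natural log, `0 log 0 = 0`
since `Real.log 0 = 0`). -/
noncomputable def entN (P : ℕ → ℝ) : ℝ := -∑ᶠ i, P i * Real.log (P i)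

/-- Joint entropy of a coupling. -/
noncomputable def entN2 (S : ℕ × ℕ → ℝ) : ℝ := -∑ᶠ x, S x * Real.log (S x)

/-- Mutual information of a coupling `S` of `P` and `Q` (terms with `S x = 0`
vanish). -/
noncomputable def mutInfoN (P Q : ℕ → ℝ) (S : ℕ × ℕ → ℝ) : ℝ :=
  ∑ᶠ x : ℕ × ℕ, S x * Real.log (S x / (P x.1 * Q x.2))

/-- Variation of information of a coupling. -/
noncomputable def vi (P Q : ℕ → ℝ) (S : ℕ × ℕ → ℝ) : ℝ :=
  entN2 S - mutInfoN P Q S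

/-- `Δ̲(P,Q)`: the infimum of the variation of information over all couplings. -/
noncomputable def viDist (P Q : ℕ → ℝ) : ℝ :=
  sInf {d : ℝ | ∃ S : ℕ × ℕ → ℝ, MemCouplingN P Q S ∧ d = vi P Q S}

namespace ViAux
open Function
variable {P Q : ℕ → ℝ} {S : ℕ × ℕ → ℝ} {F G : Finset ℕ}


variable {P Q : ℕ → ℝ} {S : ℕ × ℕ → ℝ}

lemma row_support_finite (h : (support S).Finite) (i : ℕ) :
    (support fun j => S (i, j)).Finite :=
  Set.Finite.subset (h.image Prod.snd) (fun j hj => ⟨(i, j), hj, rfl⟩)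

lemma col_support_finite (h : (support S).Finite) (j : ℕ) :
    (support fun i => S (i, j)).Finite :=
  Set.Finite.subset (h.image Prod.fst) (fun i hi => ⟨(i, j), hi, rfl⟩)

lemma le_marg_fst (hS : MemCouplingN P Q S) (x : ℕ × ℕ) : S x ≤ P x.1 := by
  obtain ⟨hnn, hfin, hrow, _⟩ := hS
  rw [← hrow x.1, finsum_eq_sum _ (row_support_finite hfin x.1)]
  by_cases hx : S x = 0
  · rw [hx]; exact Finset.sum_nonneg fun j _ => hnn _
  · exact Finset.single_le_sum (f := fun j => S (x.1, j)) (fun j _ => hnn _)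
      (by simpa [Set.Finite.mem_toFinset, Function.mem_support] using hx)

lemma le_marg_snd (hS : MemCouplingN P Q S) (x : ℕ × ℕ) : S x ≤ Q x.2 := by
  obtain ⟨hnn, hfin, _, hcol⟩ := hS
  rw [← hcol x.2, finsum_eq_sum _ (col_support_finite hfin x.2)]
  by_cases hx : S x = 0
  · rw [hx]; exact Finset.sum_nonneg fun i _ => hnn _
  · exact Finset.single_le_sum (f := fun i => S (i, x.2)) (fun i _ => hnn _)
      (by simpa [Set.Finite.mem_toFinset, Function.mem_support] using hx)

lemma pos_marg (hS : MemCouplingN P Q S) {x : ℕ × ℕ} (hx : S x ≠ 0) :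
    0 < S x ∧ 0 < P x.1 ∧ 0 < Q x.2 := by
  have h0 : 0 < S x := lt_of_le_of_ne (hS.1 x) (Ne.symm hx)
  exact ⟨h0, lt_of_lt_of_le h0 (le_marg_fst hS x), lt_of_lt_of_le h0 (le_marg_snd hS x)⟩

lemma supp_sub (hS : MemCouplingN P Q S) (hF : support P ⊆ ↑F) (hG : support Q ⊆ ↑G) :
    support S ⊆ ↑(F ×ˢ G) := by
  intro x hx
  obtain ⟨-, hp, hq⟩ := pos_marg hS hx
  simp only [Finset.coe_product, Set.mem_prod]
  exact ⟨hF hp.ne', hG hq.ne'⟩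

lemma row_sum (hS : MemCouplingN P Q S) (hG : support Q ⊆ ↑G) (i : ℕ) :
    ∑ j ∈ G, S (i, j) = P i := by
  rw [← hS.2.2.1 i]
  refine (finsum_eq_finset_sum_of_support_subset _ ?_).symm
  intro j hj
  exact hG (pos_marg hS (x := (i, j)) hj).2.2.ne'

lemma col_sum (hS : MemCouplingN P Q S) (hF : support P ⊆ ↑F) (j : ℕ) :
    ∑ i ∈ F, S (i, j) = Q j := by
  rw [← hS.2.2.2 j]
  refine (finsum_eq_finset_sum_of_support_subset _ ?_).symm
  intro i hi
  exact hF (pos_marg hS (x := (i, j)) hi).2.1.ne'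

lemma entN_sum (hF : support P ⊆ ↑F) : entN P = -∑ i ∈ F, P i * Real.log (P i) := by
  rw [entN]
  congr 1
  refine finsum_eq_finset_sum_of_support_subset _ ?_
  intro i hi
  apply hF
  intro h0
  exact hi (by simp [Function.mem_support, not_not] at h0 ⊢; simp [h0])

lemma entN2_sum (hS : MemCouplingN P Q S) (hF : support P ⊆ ↑F) (hG : support Q ⊆ ↑G) :
    entN2 S = -∑ x ∈ F ×ˢ G, S x * Real.log (S x) := by
  rw [entN2]
  congr 1
  refine finsum_eq_finset_sum_of_support_subset _ ?_
  intro x hx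
  refine supp_sub hS hF hG ?_
  intro h0
  exact hx (by simp [h0])

lemma mutInfoN_sum (hS : MemCouplingN P Q S) (hF : support P ⊆ ↑F) (hG : support Q ⊆ ↑G) :
    mutInfoN P Q S = ∑ x ∈ F ×ˢ G, S x * Real.log (S x / (P x.1 * Q x.2)) := by
  refine finsum_eq_finset_sum_of_support_subset _ ?_
  intro x hx
  refine supp_sub hS hF hG ?_
  intro h0
  exact hx (by simp [h0])

lemma vi_eq (hS : MemCouplingN P Q S) (hF : support P ⊆ ↑F) (hG : support Q ⊆ ↑G) :
    vi P Q S = (entN P - entN Q) +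
      2 * ∑ x ∈ F ×ˢ G, S x * Real.log (P x.1 / S x) := by
  have hterm1 : ∀ x : ℕ × ℕ, S x * Real.log (S x / (P x.1 * Q x.2)) =
      S x * Real.log (S x) - S x * Real.log (P x.1) - S x * Real.log (Q x.2) := by
    intro x
    by_cases hx : S x = 0
    · simp [hx]
    · obtain ⟨h1, h2, h3⟩ := pos_marg hS hx
      rw [Real.log_div hx (by positivity), Real.log_mul h2.ne' h3.ne']
      ring
  have hterm2 : ∀ x : ℕ × ℕ, S x * Real.log (P x.1 / S x) =
      S x * Real.log (P x.1) - S x * Real.log (S x) := by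
    intro x
    by_cases hx : S x = 0
    · simp [hx]
    · obtain ⟨h1, h2, h3⟩ := pos_marg hS hx
      rw [Real.log_div h2.ne' hx]
      ring
  have hA : ∑ x ∈ F ×ˢ G, S x * Real.log (P x.1) = ∑ i ∈ F, P i * Real.log (P i) := by
    rw [Finset.sum_product]
    refine Finset.sum_congr rfl fun i _ => ?_
    have h : (∑ y ∈ G, S (i, y)) * Real.log (P i) = ∑ y ∈ G, S (i, y) * Real.log (P i) :=
      Finset.sum_mul ..
    rw [row_sum hS hG] at h
    exact h.symm
  have hB : ∑ x ∈ F ×ˢ G, S x * Real.log (Q x.2) = ∑ j ∈ G, Q j * Real.log (Q j) := by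
    rw [Finset.sum_product_right]
    refine Finset.sum_congr rfl fun j _ => ?_
    have h : (∑ i ∈ F, S (i, j)) * Real.log (Q j) = ∑ i ∈ F, S (i, j) * Real.log (Q j) :=
      Finset.sum_mul ..
    rw [col_sum hS hF] at h
    exact h.symm
  rw [vi, mutInfoN_sum hS hF hG, entN2_sum hS hF hG, entN_sum hF, entN_sum hG,
    Finset.sum_congr rfl (fun x _ => hterm1 x),
    Finset.sum_congr rfl (fun x _ => hterm2 x),
    Finset.sum_sub_distrib, Finset.sum_sub_distrib, Finset.sum_sub_distrib, hA, hB]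
  ring

lemma term_nonneg (hS : MemCouplingN P Q S) (x : ℕ × ℕ) :
    0 ≤ S x * Real.log (P x.1 / S x) := by
  by_cases hx : S x = 0
  · simp [hx]
  · obtain ⟨h1, h2, h3⟩ := pos_marg hS hx
    refine mul_nonneg h1.le (Real.log_nonneg ?_)
    rw [le_div_iff₀ h1, one_mul]
    exact le_marg_fst hS x

lemma P_le_one (hP : IsFinProb P) (i : ℕ) : P i ≤ 1 := by
  by_cases h : P i = 0
  · rw [h]; norm_num
  · rw [← hP.2.2, finsum_eq_sum _ hP.2.1]
    exact Finset.single_le_sum (fun j _ => hP.1 j)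
      (by simpa [Set.Finite.mem_toFinset, Function.mem_support] using h)

lemma prod_coupling (hP : IsFinProb P) (hQ : IsFinProb Q) :
    MemCouplingN P Q (fun x => P x.1 * Q x.2) := by
  refine ⟨fun x => mul_nonneg (hP.1 _) (hQ.1 _), ?_, ?_, ?_⟩
  · refine Set.Finite.subset (hP.2.1.prod hQ.2.1) ?_
    intro x hx
    simp only [Function.mem_support] at hx
    exact ⟨left_ne_zero_of_mul hx, right_ne_zero_of_mul hx⟩
  · intro i
    simp only []
    rw [← mul_finsum _ _, hQ.2.2, mul_one]
  · intro j
    simp only []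
    rw [← finsum_mul _ _, hP.2.2, one_mul]

/-- D = 0 implies deterministic rows. -/
lemma det_of_sum_zero (hS : MemCouplingN P Q S) (hF : support P ⊆ ↑F) (hG : support Q ⊆ ↑G)
    (hz : ∑ x ∈ F ×ˢ G, S x * Real.log (P x.1 / S x) = 0) :
    ∀ i, ∀ j j' : ℕ, S (i, j) ≠ 0 → S (i, j') ≠ 0 → j = j' := by
  have hterm : ∀ x ∈ F ×ˢ G, S x * Real.log (P x.1 / S x) = 0 :=
    (Finset.sum_eq_zero_iff_of_nonneg (fun x _ => term_nonneg hS x)).1 hz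
  have heq : ∀ x : ℕ × ℕ, S x ≠ 0 → S x = P x.1 := by
    intro x hx
    have hmem : x ∈ F ×ˢ G := by
      have := supp_sub hS hF hG (Function.mem_support.2 hx)
      exact_mod_cast this
    have h0 := hterm x hmem
    rcases mul_eq_zero.1 h0 with h | h
    · exact absurd h hx
    · obtain ⟨h1, h2, -⟩ := pos_marg hS hx
      rcases Real.log_eq_zero.1 h with h' | h' | h'
      · exact absurd h' (by positivity)
      · field_simp at h'
        linarith [h']
      · nlinarith [div_pos h2 h1]
  intro i j j' hj hj'
  by_contra hne
  have h1 : S (i, j) = P i := heq (i, j) hj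
  have h2 : S (i, j') = P i := heq (i, j') hj'
  have hjG : j ∈ G := hG (pos_marg hS (x := (i, j)) hj).2.2.ne'
  have hj'G : j' ∈ G := hG (pos_marg hS (x := (i, j')) hj').2.2.ne'
  have hsub : ({j, j'} : Finset ℕ) ⊆ G := by
    intro a ha
    rcases Finset.mem_insert.1 ha with h | h
    · exact h ▸ hjG
    · exact (Finset.mem_singleton.1 h) ▸ hj'G
  have hle : ∑ a ∈ ({j, j'} : Finset ℕ), S (i, a) ≤ ∑ a ∈ G, S (i, a) :=
    Finset.sum_le_sum_of_subset_of_nonneg hsub (fun a _ _ => hS.1 (i, a))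
  rw [Finset.sum_pair hne, row_sum hS hG, h1, h2] at hle
  have hpos : 0 < P i := (pos_marg hS (x := (i, j)) hj).2.1
  linarith

/-- deterministic rows implies D-term vanishes. -/
lemma sum_zero_of_det (hS : MemCouplingN P Q S) (hG : support Q ⊆ ↑G)
    (hdet : ∀ i, ∀ j j' : ℕ, S (i, j) ≠ 0 → S (i, j') ≠ 0 → j = j') :
    ∀ x : ℕ × ℕ, S x * Real.log (P x.1 / S x) = 0 := by
  intro x
  by_cases hx : S x = 0
  · simp [hx]
  · have hxG : x.2 ∈ G := hG (pos_marg hS hx).2.2.ne'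
    have hrow : ∑ j ∈ G, S (x.1, j) = P x.1 := row_sum hS hG x.1
    have hsingle : ∑ j ∈ G, S (x.1, j) = S x := by
      refine Finset.sum_eq_single_of_mem x.2 hxG ?_
      intro j _ hjne
      by_contra hj
      exact hjne (hdet x.1 j x.2 hj hx)
    have : S x = P x.1 := by rw [← hsingle, hrow]
    rw [this, div_self (pos_marg hS hx).2.1.ne', Real.log_one, mul_zero]

lemma exists_min (hP : IsFinProb P) (hQ : IsFinProb Q) :
    ∃ S0 : ℕ × ℕ → ℝ, MemCouplingN P Q S0 ∧
      ∀ S, MemCouplingN P Q S → vi P Q S0 ≤ vi P Q S := by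
  classical
  set F : Finset ℕ := hP.2.1.toFinset with hFdef
  set G : Finset ℕ := hQ.2.1.toFinset with hGdef
  have hF : support P ⊆ ↑F := by rw [hFdef]; simp
  have hG : support Q ⊆ ↑G := by rw [hGdef]; simp
  set E : Finset (ℕ × ℕ) := F ×ˢ G with hEdef
  let e : ({x // x ∈ E} → ℝ) → (ℕ × ℕ → ℝ) :=
    fun f x => if h : x ∈ E then f ⟨x, h⟩ else 0
  have heval : ∀ (f : {x // x ∈ E} → ℝ) (a : {x // x ∈ E}), e f ↑a = f a := by
    intro f a
    show (if h : ↑a ∈ E then f ⟨↑a, h⟩ else 0) = f a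
    rw [dif_pos a.2]
  have he_supp : ∀ f, support (e f) ⊆ ↑E := by
    intro f x hx
    by_contra h
    exact hx (dif_neg (fun hc => h hc))
  have he_rest : ∀ S : ℕ × ℕ → ℝ, MemCouplingN P Q S → e (fun a => S ↑a) = S := by
    intro S hS
    funext x
    by_cases h : x ∈ E
    · show (if h' : x ∈ E then S ↑(⟨x, h'⟩ : {x // x ∈ E}) else 0) = S x
      rw [dif_pos h]
    · show (if h' : x ∈ E then S ↑(⟨x, h'⟩ : {x // x ∈ E}) else 0) = S x
      rw [dif_neg h]
      by_contra hc
      exact h (supp_sub hS hF hG (Function.mem_support.2 fun h0 => hc h0.symm))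
  have hrowfs : ∀ f i, ∑ᶠ j, e f (i, j) = ∑ j ∈ G, e f (i, j) := by
    intro f i
    refine finsum_eq_finset_sum_of_support_subset _ ?_
    intro j hj
    have : (i, j) ∈ E := by exact_mod_cast he_supp f hj
    exact (Finset.mem_product.1 this).2
  have hcolfs : ∀ f j, ∑ᶠ i, e f (i, j) = ∑ i ∈ F, e f (i, j) := by
    intro f j
    refine finsum_eq_finset_sum_of_support_subset _ ?_
    intro i hi
    have : (i, j) ∈ E := by exact_mod_cast he_supp f hi
    exact (Finset.mem_product.1 this).1
  set K : Set ({x // x ∈ E} → ℝ) := {f | MemCouplingN P Q (e f)} with hKdef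
  have hKiff : ∀ f, f ∈ K ↔ ((∀ a, 0 ≤ f a) ∧ (∀ i, ∑ j ∈ G, e f (i, j) = P i) ∧
      (∀ j, ∑ i ∈ F, e f (i, j) = Q j)) := by
    intro f
    constructor
    · rintro ⟨c1, c2, c3, c4⟩
      refine ⟨fun a => ?_, fun i => ?_, fun j => ?_⟩
      · have := c1 ↑a; rwa [heval] at this
      · rw [← hrowfs]; exact c3 i
      · rw [← hcolfs]; exact c4 j
    · rintro ⟨c1, c2, c3⟩
      refine ⟨fun x => ?_, Set.Finite.subset E.finite_toSet (he_supp f), fun i => ?_,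
        fun j => ?_⟩
      · by_cases h : x ∈ E
        · have : e f x = f ⟨x, h⟩ := dif_pos h
          rw [this]; exact c1 _
        · rw [show e f x = 0 from dif_neg h]
      · rw [hrowfs]; exact c2 i
      · rw [hcolfs]; exact c3 j
  have hrowcont : ∀ i : ℕ, Continuous fun f : {x // x ∈ E} → ℝ => ∑ j ∈ G, e f (i, j) := by
    intro i
    apply continuous_finset_sum
    intro j _
    show Continuous fun f : {x // x ∈ E} → ℝ => if h : (i, j) ∈ E then f ⟨(i, j), h⟩ else 0
    by_cases h : (i, j) ∈ E
    · simp only [dif_pos h]; exact continuous_apply _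
    · simp only [dif_neg h]; exact continuous_const
  have hcolcont : ∀ j : ℕ, Continuous fun f : {x // x ∈ E} → ℝ => ∑ i ∈ F, e f (i, j) := by
    intro j
    apply continuous_finset_sum
    intro i _
    show Continuous fun f : {x // x ∈ E} → ℝ => if h : (i, j) ∈ E then f ⟨(i, j), h⟩ else 0
    by_cases h : (i, j) ∈ E
    · simp only [dif_pos h]; exact continuous_apply _
    · simp only [dif_neg h]; exact continuous_const
  have hclosed : IsClosed K := by
    have hKeq : K = (⋂ a, {f : {x // x ∈ E} → ℝ | 0 ≤ f a}) ∩
        ((⋂ i, {f : {x // x ∈ E} → ℝ | (∑ j ∈ G, e f (i, j)) = P i}) ∩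
         (⋂ j, {f : {x // x ∈ E} → ℝ | (∑ i ∈ F, e f (i, j)) = Q j})) := by
      ext f
      simp only [Set.mem_inter_iff, Set.mem_iInter, Set.mem_setOf_eq]
      rw [show (f ∈ K) = MemCouplingN P Q (e f) from rfl] at *
      constructor
      · intro h
        obtain ⟨c1, c2, c3⟩ := (hKiff f).1 h
        exact ⟨c1, c2, c3⟩
      · rintro ⟨c1, c2, c3⟩
        exact (hKiff f).2 ⟨c1, c2, c3⟩
    rw [hKeq]
    refine IsClosed.inter (isClosed_iInter fun a =>
        isClosed_le continuous_const (continuous_apply a))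
      (IsClosed.inter (isClosed_iInter fun i => isClosed_eq (hrowcont i) continuous_const)
        (isClosed_iInter fun j => isClosed_eq (hcolcont j) continuous_const))
  have hKbdd : K ⊆ Metric.closedBall (0 : {x // x ∈ E} → ℝ) 1 := by
    intro f hf
    rw [Metric.mem_closedBall, dist_zero_right,
      pi_norm_le_iff_of_nonneg (by norm_num : (0:ℝ) ≤ 1)]
    intro a
    rw [Real.norm_eq_abs, abs_le]
    have h0 : 0 ≤ f a := ((hKiff f).1 hf).1 a
    have h1 : f a ≤ 1 := by
      have hle := le_marg_fst hf (↑a : ℕ × ℕ)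
      rw [heval] at hle
      exact hle.trans (P_le_one hP _)
    constructor <;> linarith
  have hKcpt : IsCompact K :=
    Metric.isCompact_of_isClosed_isBounded hclosed
      (Metric.isBounded_closedBall.subset hKbdd)
  have hKne : K.Nonempty := by
    refine ⟨fun a => P (↑a : ℕ × ℕ).1 * Q (↑a : ℕ × ℕ).2, ?_⟩
    show MemCouplingN P Q (e fun a => (fun x : ℕ × ℕ => P x.1 * Q x.2) ↑a)
    rw [he_rest _ (prod_coupling hP hQ)]
    exact prod_coupling hP hQ
  set φ : ({x // x ∈ E} → ℝ) → ℝ :=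
    fun f => ∑ a : {x // x ∈ E}, (f a * Real.log (P (↑a : ℕ × ℕ).1) +
      Real.negMulLog (f a)) with hφdef
  have hφc : Continuous φ := by
    apply continuous_finset_sum
    intro a _
    exact ((continuous_apply a).mul continuous_const).add
      (Real.continuous_negMulLog.comp (continuous_apply a))
  have hrel : ∀ f ∈ K, vi P Q (e f) = (entN P - entN Q) + 2 * φ f := by
    intro f hf
    rw [vi_eq hf hF hG]
    congr 1
    congr 1
    rw [← Finset.sum_attach E (fun x => e f x * Real.log (P x.1 / e f x)), hφdef,
      Finset.univ_eq_attach]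
    refine Finset.sum_congr rfl fun a _ => ?_
    rw [heval]
    by_cases h0 : f a = 0
    · simp [h0]
    · have hpm := pos_marg hf (x := ↑a) (by rw [heval]; exact h0)
      rw [heval] at hpm
      rw [Real.log_div hpm.2.1.ne' h0, Real.negMulLog]
      ring
  obtain ⟨f0, hf0K, hf0min⟩ := hKcpt.exists_isMinOn hKne hφc.continuousOn
  refine ⟨e f0, hf0K, ?_⟩
  intro S hS
  have hSK : (fun a : {x // x ∈ E} => S ↑a) ∈ K := by
    show MemCouplingN P Q (e fun a => S ↑a)
    rw [he_rest _ hS]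
    exact hS
  have h1 : φ f0 ≤ φ (fun a : {x // x ∈ E} => S ↑a) := isMinOn_iff.1 hf0min _ hSK
  have h2 := hrel f0 hf0K
  have h3 := hrel _ hSK
  rw [he_rest _ hS] at h3
  rw [h2, h3]
  linarith
end ViAux

/-- `Δ̲(P,Q) = H(P) − H(Q)` iff there is a coupling in which the second
coordinate is a deterministic function of the first (at most one nonzero entry per row). -/
theorem viDist_eq_entropy_diff_iff (P Q : ℕ → ℝ) (hP : IsFinProb P) (hQ : IsFinProb Q) :
    viDist P Q = entN P - entN Q ↔
    ∃ S : ℕ × ℕ → ℝ, MemCouplingN P Q S ∧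
      ∀ i, ∀ j j' : ℕ, S (i, j) ≠ 0 → S (i, j') ≠ 0 → j = j' := by
  classical
  have hF : Function.support P ⊆ ↑hP.2.1.toFinset := by simp
  have hG : Function.support Q ⊆ ↑hQ.2.1.toFinset := by simp
  set F : Finset ℕ := hP.2.1.toFinset
  set G : Finset ℕ := hQ.2.1.toFinset
  set M : Set ℝ := {d | ∃ S : ℕ × ℕ → ℝ, MemCouplingN P Q S ∧ d = vi P Q S} with hM
  have hDist : viDist P Q = sInf M := rfl
  have hvge : ∀ S, MemCouplingN P Q S → entN P - entN Q ≤ vi P Q S := by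
    intro S hS
    rw [ViAux.vi_eq hS hF hG]
    have := Finset.sum_nonneg (fun x (_ : x ∈ F ×ˢ G) => ViAux.term_nonneg hS x)
    linarith
  have hne : M.Nonempty := ⟨_, _, ViAux.prod_coupling hP hQ, rfl⟩
  have hbdd : BddBelow M :=
    ⟨entN P - entN Q, by rintro d ⟨S, hS, rfl⟩; exact hvge S hS⟩
  constructor
  · intro h
    obtain ⟨S0, hS0, hmin⟩ := ViAux.exists_min hP hQ
    have hmem : vi P Q S0 ∈ M := ⟨S0, hS0, rfl⟩
    have hsinf : viDist P Q = vi P Q S0 := by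
      rw [hDist]
      exact le_antisymm (csInf_le hbdd hmem)
        (le_csInf hne (by rintro d ⟨S, hS, rfl⟩; exact hmin S hS))
    have hv0 : vi P Q S0 = entN P - entN Q := by rw [← hsinf, h]
    have hz : ∑ x ∈ F ×ˢ G, S0 x * Real.log (P x.1 / S0 x) = 0 := by
      have hv := ViAux.vi_eq hS0 hF hG
      rw [hv0] at hv
      linarith
    exact ⟨S0, hS0, ViAux.det_of_sum_zero hS0 hF hG hz⟩
  · rintro ⟨S, hS, hdet⟩
    have hz : ∑ x ∈ F ×ˢ G, S x * Real.log (P x.1 / S x) = 0 :=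
      Finset.sum_eq_zero (fun x _ => ViAux.sum_zero_of_det hS hG hdet x)
    have hvS : vi P Q S = entN P - entN Q := by
      rw [ViAux.vi_eq hS hF hG, hz]; ring
    rw [hDist]
    refine le_antisymm ?_ (le_csInf hne ?_)
    · exact csInf_le hbdd ⟨S, hS, hvS.symm⟩
    · rintro d ⟨S', hS', rfl⟩
      exact hvge S' hS'
end

section
/- For all finitely supported probability distributions P, Q, R on ℕ, the triangle inequality Δ̲(P,R) ≤ Δ̲(P,Q) + Δ̲(Q,R) holds; together with nonnegativity, symmetry, and Δ̲(P,P) = 0, this makes Δ̲ a pseudometric on the set of finitely supported probability distributions on ℕ. -/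
open Real

open Function


/-! ### Generic finsum helpers -/

lemma fin_le_finsum {α : Type*} {f : α → ℝ} (h0 : ∀ i, 0 ≤ f i)
    (hf : (support f).Finite) (a : α) : f a ≤ ∑ᶠ i, f i := by
  classical
  rw [finsum_eq_sum_of_support_subset f (s := insert a hf.toFinset)
    (by intro x hx; simp [hf.mem_toFinset, hx])]
  exact Finset.single_le_sum (fun i _ => h0 i) (Finset.mem_insert_self a _)

lemma finsum_le_finsum'' {α : Type*} {f g : α → ℝ} (hf : (support f).Finite)
    (hg : (support g).Finite) (h : ∀ i, f i ≤ g i) : ∑ᶠ i, f i ≤ ∑ᶠ i, g i := by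
  classical
  rw [finsum_eq_sum_of_support_subset f (s := hf.toFinset ∪ hg.toFinset)
    (by intro x hx; simp [hf.mem_toFinset, hg.mem_toFinset]; left; exact hx),
    finsum_eq_sum_of_support_subset g (s := hf.toFinset ∪ hg.toFinset)
    (by intro x hx; simp [hf.mem_toFinset, hg.mem_toFinset]; right; exact hx)]
  exact Finset.sum_le_sum fun i _ => h i

section Marg
variable {α β : Type*} [DecidableEq α] [DecidableEq β] {S : α × β → ℝ}

/-- marginal over second coordinate equals a finset sum -/
lemma marg_fst_eq_sum (hfin : (support S).Finite) (i : α) :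
    ∑ᶠ j, S (i, j) = ∑ j ∈ hfin.toFinset.image Prod.snd, S (i, j) := by
  apply finsum_eq_sum_of_support_subset
  intro j hj
  simp only [Finset.coe_image, Set.mem_image, Finset.mem_coe, Set.Finite.mem_toFinset]
  exact ⟨(i, j), hj, rfl⟩

lemma supp_marg_fst (hfin : (support S).Finite) :
    (support fun i => ∑ᶠ j, S (i, j)) ⊆ ↑(hfin.toFinset.image Prod.fst) := by
  intro i hi
  simp only [mem_support] at hi
  by_contra hne
  apply hi
  apply finsum_eq_zero_of_forall_eq_zero
  intro j
  by_contra hS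
  exact hne (by
    simp only [Finset.coe_image, Set.mem_image, Finset.mem_coe, Set.Finite.mem_toFinset]
    exact ⟨(i, j), hS, rfl⟩)

/-- pushing a function of the first coordinate through the marginal -/
lemma finsum_marg_fst_mul (hfin : (support S).Finite) (g : α → ℝ) :
    ∑ᶠ i, (∑ᶠ j, S (i, j)) * g i = ∑ᶠ x, S x * g x.1 := by
  classical
  set A := hfin.toFinset.image Prod.fst with hA
  set B := hfin.toFinset.image Prod.snd with hB
  have h1 : ∑ᶠ i, (∑ᶠ j, S (i, j)) * g i = ∑ i ∈ A, (∑ᶠ j, S (i, j)) * g i := by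
    apply finsum_eq_sum_of_support_subset
    intro i hi
    have : i ∈ support fun i => ∑ᶠ j, S (i, j) := by
      simp only [mem_support] at hi ⊢
      intro h; exact hi (by rw [h, zero_mul])
    exact supp_marg_fst hfin this
  have h2 : ∑ᶠ x, S x * g x.1 = ∑ x ∈ A ×ˢ B, S x * g x.1 := by
    apply finsum_eq_sum_of_support_subset
    intro x hx
    have hxS : x ∈ support S := by
      simp only [mem_support] at hx ⊢
      intro h; exact hx (by rw [h, zero_mul])
    simp only [Finset.coe_product, Set.mem_prod, hA, hB, Finset.coe_image,
      Set.mem_image, Finset.mem_coe, Set.Finite.mem_toFinset]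
    exact ⟨⟨x, hxS, rfl⟩, ⟨x, hxS, rfl⟩⟩
  rw [h1, h2, Finset.sum_product]
  refine Finset.sum_congr rfl fun i _ => ?_
  rw [marg_fst_eq_sum hfin i, Finset.sum_mul]

/-- entropy of first marginal is at most joint entropy -/
lemma ent_marg_fst (h0 : ∀ x, 0 ≤ S x) (hfin : (support S).Finite) :
    -∑ᶠ i, (∑ᶠ j, S (i, j)) * Real.log (∑ᶠ j, S (i, j)) ≤ -∑ᶠ x, S x * Real.log (S x) := by
  rw [finsum_marg_fst_mul hfin (fun i => Real.log (∑ᶠ j, S (i, j))), neg_le_neg_iff]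
  apply finsum_le_finsum''
  · refine hfin.subset fun x hx => ?_
    simp only [mem_support] at hx ⊢
    intro h; exact hx (by rw [h, zero_mul])
  · refine hfin.subset fun x hx => ?_
    simp only [mem_support] at hx ⊢
    intro h; exact hx (by rw [h, zero_mul])
  · intro x
    rcases eq_or_lt_of_le (h0 x) with h | h
    · simp [← h]
    · have hinj : Function.Injective (fun j : β => ((x.1, j) : α × β)) := fun a b hab => by
        simpa using congrArg Prod.snd hab
      have hsupp : (support fun j => S (x.1, j)).Finite :=
        hfin.preimage (hinj.injOn)
      have hle : S x ≤ ∑ᶠ j, S (x.1, j) := by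
        have := fin_le_finsum (f := fun j => S (x.1, j)) (fun j => h0 _) hsupp x.2
        simpa using this
      exact mul_le_mul_of_nonneg_left (Real.log_le_log h hle) (h0 x)

lemma supp_slice_fst (hfin : (support S).Finite) (i : α) :
    (support fun j => S (i, j)).Finite := by
  have hinj : Function.Injective (fun j : β => ((i, j) : α × β)) := fun a b hab => by
    simpa using congrArg Prod.snd hab
  exact hfin.preimage hinj.injOn

lemma supp_slice_snd (hfin : (support S).Finite) (j : β) :
    (support fun i => S (i, j)).Finite := by
  have hinj : Function.Injective (fun i : α => ((i, j) : α × β)) := fun a b hab => by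
    simpa using congrArg Prod.fst hab
  exact hfin.preimage hinj.injOn

lemma supp_swap_finite (hfin : (support S).Finite) :
    (support fun y : β × α => S (y.2, y.1)).Finite := by
  have : (support fun y : β × α => S (y.2, y.1)) = Prod.swap ⁻¹' (support S) := by
    ext y; simp [Prod.swap, mem_support]
  rw [this]
  exact hfin.preimage Prod.swap_injective.injOn

lemma finsum_swap (f : α × β → ℝ) :
    ∑ᶠ x, f x = ∑ᶠ y : β × α, f (y.2, y.1) := by
  exact (finsum_comp_equiv (Equiv.prodComm β α)).symm

lemma finsum_marg_snd_mul (hfin : (support S).Finite) (g : β → ℝ) :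
    ∑ᶠ j, (∑ᶠ i, S (i, j)) * g j = ∑ᶠ x, S x * g x.2 := by
  have h := finsum_marg_fst_mul (S := fun y : β × α => S (y.2, y.1))
    (supp_swap_finite hfin) g
  rw [h, ← finsum_swap (fun x => S x * g x.2)]

lemma ent_marg_snd (h0 : ∀ x, 0 ≤ S x) (hfin : (support S).Finite) :
    -∑ᶠ j, (∑ᶠ i, S (i, j)) * Real.log (∑ᶠ i, S (i, j)) ≤ -∑ᶠ x, S x * Real.log (S x) := by
  have h := ent_marg_fst (S := fun y : β × α => S (y.2, y.1))
    (fun y => h0 _) (supp_swap_finite hfin)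
  rw [finsum_swap (fun x => S x * Real.log (S x))]
  exact h

end Marg

/-! ### Coupling lemmas -/

lemma coupling_le_fst {P Q : ℕ → ℝ} {S : ℕ × ℕ → ℝ} (hS : MemCouplingN P Q S)
    (x : ℕ × ℕ) : S x ≤ P x.1 := by
  obtain ⟨h0, hfin, hPm, _⟩ := hS
  rw [← hPm x.1]
  have := fin_le_finsum (f := fun j => S (x.1, j)) (fun j => h0 _)
    (supp_slice_fst hfin x.1) x.2
  simpa using this

lemma coupling_le_snd {P Q : ℕ → ℝ} {S : ℕ × ℕ → ℝ} (hS : MemCouplingN P Q S)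
    (x : ℕ × ℕ) : S x ≤ Q x.2 := by
  obtain ⟨h0, hfin, _, hQm⟩ := hS
  rw [← hQm x.2]
  have := fin_le_finsum (f := fun i => S (i, x.2)) (fun i => h0 _)
    (supp_slice_snd hfin x.2) x.1
  simpa using this

lemma supp_mul_log_subset {γ : Type*} (f : γ → ℝ) (g : γ → ℝ) :
    (support fun x => f x * g x) ⊆ support f := by
  intro x hx
  simp only [mem_support] at hx ⊢
  intro h; exact hx (by rw [h, zero_mul])

lemma mutInfo_eq {P Q : ℕ → ℝ} {S : ℕ × ℕ → ℝ} (hS : MemCouplingN P Q S) :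
    mutInfoN P Q S = entN P + entN Q - entN2 S := by
  have hle1 := coupling_le_fst hS
  have hle2 := coupling_le_snd hS
  obtain ⟨h0, hfin, hPm, hQm⟩ := hS
  have key : ∀ x : ℕ × ℕ, S x * Real.log (S x / (P x.1 * Q x.2)) =
      S x * Real.log (S x) - (S x * Real.log (P x.1) + S x * Real.log (Q x.2)) := by
    intro x
    rcases eq_or_lt_of_le (h0 x) with h | h
    · rw [← h]; ring
    · have hP0 : 0 < P x.1 := lt_of_lt_of_le h (hle1 x)
      have hQ0 : 0 < Q x.2 := lt_of_lt_of_le h (hle2 x)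
      rw [Real.log_div (ne_of_gt h) (by positivity), Real.log_mul (ne_of_gt hP0) (ne_of_gt hQ0)]
      ring
  have h1 : (support fun x => S x * Real.log (S x)).Finite :=
    hfin.subset (supp_mul_log_subset _ _)
  have h2 : (support fun x : ℕ × ℕ => S x * Real.log (P x.1) + S x * Real.log (Q x.2)).Finite := by
    refine hfin.subset fun x hx => ?_
    simp only [mem_support] at hx ⊢
    intro h; exact hx (by rw [h]; ring)
  have h3 : (support fun x : ℕ × ℕ => S x * Real.log (P x.1)).Finite :=
    hfin.subset (supp_mul_log_subset _ _)
  have h4 : (support fun x : ℕ × ℕ => S x * Real.log (Q x.2)).Finite :=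
    hfin.subset (supp_mul_log_subset _ _)
  have e1 : ∑ᶠ x : ℕ × ℕ, S x * Real.log (P x.1) = ∑ᶠ i, P i * Real.log (P i) := by
    rw [← finsum_marg_fst_mul hfin (fun i => Real.log (P i))]
    exact finsum_congr fun i => by rw [hPm i]
  have e2 : ∑ᶠ x : ℕ × ℕ, S x * Real.log (Q x.2) = ∑ᶠ j, Q j * Real.log (Q j) := by
    rw [← finsum_marg_snd_mul hfin (fun j => Real.log (Q j))]
    exact finsum_congr fun j => by rw [hQm j]
  calc mutInfoN P Q S
      = ∑ᶠ x : ℕ × ℕ, (S x * Real.log (S x) -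
          (S x * Real.log (P x.1) + S x * Real.log (Q x.2))) := finsum_congr key
    _ = (∑ᶠ x : ℕ × ℕ, S x * Real.log (S x)) -
          ∑ᶠ x : ℕ × ℕ, (S x * Real.log (P x.1) + S x * Real.log (Q x.2)) :=
        finsum_sub_distrib h1 h2
    _ = (∑ᶠ x : ℕ × ℕ, S x * Real.log (S x)) -
          ((∑ᶠ x : ℕ × ℕ, S x * Real.log (P x.1)) + ∑ᶠ x : ℕ × ℕ, S x * Real.log (Q x.2)) := by
        rw [finsum_add_distrib h3 h4]
    _ = entN P + entN Q - entN2 S := by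
        rw [e1, e2]; simp only [entN, entN2]; ring

lemma vi_eq {P Q : ℕ → ℝ} {S : ℕ × ℕ → ℝ} (hS : MemCouplingN P Q S) :
    vi P Q S = 2 * entN2 S - entN P - entN Q := by
  rw [vi, mutInfo_eq hS]; ring

lemma vi_nonneg {P Q : ℕ → ℝ} {S : ℕ × ℕ → ℝ} (hS : MemCouplingN P Q S) :
    0 ≤ vi P Q S := by
  have h := vi_eq hS
  obtain ⟨h0, hfin, hPm, hQm⟩ := hS
  have hent1 : entN P ≤ entN2 S := by
    have := ent_marg_fst h0 hfin
    simp only [entN, entN2]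
    calc -∑ᶠ i, P i * Real.log (P i)
        = -∑ᶠ i, (∑ᶠ j, S (i, j)) * Real.log (∑ᶠ j, S (i, j)) := by
          congr 1; exact finsum_congr fun i => by rw [hPm i]
      _ ≤ -∑ᶠ x, S x * Real.log (S x) := this
  have hent2 : entN Q ≤ entN2 S := by
    have := ent_marg_snd h0 hfin
    simp only [entN, entN2]
    calc -∑ᶠ j, Q j * Real.log (Q j)
        = -∑ᶠ j, (∑ᶠ i, S (i, j)) * Real.log (∑ᶠ i, S (i, j)) := by
          congr 1; exact finsum_congr fun j => by rw [hQm j]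
      _ ≤ -∑ᶠ x, S x * Real.log (S x) := this
  rw [h]; linarith

/-! ### Product coupling, swap, diagonal -/

lemma prod_coupling {P Q : ℕ → ℝ} (hP : IsFinProb P) (hQ : IsFinProb Q) :
    MemCouplingN P Q (fun x => P x.1 * Q x.2) := by
  obtain ⟨hP0, hPfin, hP1⟩ := hP
  obtain ⟨hQ0, hQfin, hQ1⟩ := hQ
  refine ⟨fun x => mul_nonneg (hP0 _) (hQ0 _), ?_, ?_, ?_⟩
  · refine (hPfin.prod hQfin).subset fun x hx => ?_
    simp only [mem_support] at hx
    exact ⟨fun h => hx (by rw [h, zero_mul]), fun h => hx (by rw [h, mul_zero])⟩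
  · intro i
    rw [← mul_finsum (fun j => Q j) (P i), hQ1, mul_one]
  · intro j
    rw [← finsum_mul (fun i => P i) (Q j), hP1, one_mul]

lemma coupling_swap {P Q : ℕ → ℝ} {S : ℕ × ℕ → ℝ} (hS : MemCouplingN P Q S) :
    MemCouplingN Q P (fun y => S (y.2, y.1)) := by
  obtain ⟨h0, hfin, hPm, hQm⟩ := hS
  exact ⟨fun y => h0 _, supp_swap_finite hfin, fun j => hQm j, fun i => hPm i⟩

lemma vi_swap (P Q : ℕ → ℝ) (S : ℕ × ℕ → ℝ) :
    vi Q P (fun y => S (y.2, y.1)) = vi P Q S := by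
  have h1 : entN2 (fun y => S (y.2, y.1)) = entN2 S := by
    simp only [entN2]
    rw [finsum_swap (fun x => S x * Real.log (S x))]
  have h2 : mutInfoN Q P (fun y => S (y.2, y.1)) = mutInfoN P Q S := by
    simp only [mutInfoN]
    rw [finsum_swap (fun x : ℕ × ℕ => S x * Real.log (S x / (P x.1 * Q x.2)))]
    exact finsum_congr fun y => by rw [mul_comm (Q y.1) (P y.2)]
  rw [vi, vi, h1, h2]

lemma diag_coupling {P : ℕ → ℝ} (hP : IsFinProb P) :
    MemCouplingN P P (fun x => if x.1 = x.2 then P x.1 else 0) := by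
  obtain ⟨hP0, hPfin, _⟩ := hP
  have hmarg1 : ∀ i, ∑ᶠ j, (if i = j then P i else 0) = P i := by
    intro i
    rw [finsum_eq_sum_of_support_subset _ (s := {i})
      (by intro j hj; simp only [mem_support] at hj
          simp only [Finset.coe_singleton, Set.mem_singleton_iff]
          by_contra hne; exact hj (if_neg fun h => hne h.symm))]
    simp
  have hmarg2 : ∀ j, ∑ᶠ i, (if i = j then P i else 0) = P j := by
    intro j
    rw [finsum_eq_sum_of_support_subset _ (s := {j})
      (by intro i hi; simp only [mem_support] at hi
          simp only [Finset.coe_singleton, Set.mem_singleton_iff]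
          by_contra hne; exact hi (if_neg hne))]
    simp
  refine ⟨fun x => by dsimp only; split <;> simp [hP0], ?_, hmarg1, hmarg2⟩
  · refine ((hPfin.image fun i => ((i, i) : ℕ × ℕ))).subset fun x hx => ?_
    simp only [mem_support] at hx
    have hxx : x.1 = x.2 := by by_contra h; exact hx (if_neg h)
    have hPx : P x.1 ≠ 0 := fun h => hx (by rw [h]; simp)
    exact ⟨x.1, hPx, by rw [Prod.ext_iff]; exact ⟨rfl, hxx⟩⟩

lemma vi_diag {P : ℕ → ℝ} (hP : IsFinProb P) :
    vi P P (fun x => if x.1 = x.2 then P x.1 else 0) = 0 := by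
  classical
  have hD := diag_coupling hP
  rw [vi_eq hD]
  obtain ⟨hP0, hPfin, _⟩ := hP
  have hent : entN2 (fun x : ℕ × ℕ => if x.1 = x.2 then P x.1 else 0) = entN P := by
    simp only [entN2, entN]
    congr 1
    set D : ℕ × ℕ → ℝ := fun x => if x.1 = x.2 then P x.1 else 0 with hDdef
    have hsub : (support fun x => D x * Real.log (D x)) ⊆
        ↑(hPfin.toFinset.image fun i => ((i, i) : ℕ × ℕ)) := by
      intro x hx
      simp only [mem_support, hDdef] at hx
      have hxx : x.1 = x.2 := by by_contra h; simp [if_neg h] at hx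
      have hPx : P x.1 ≠ 0 := fun h => hx (by rw [if_pos hxx, h, zero_mul])
      simp only [Finset.coe_image, Set.mem_image, Finset.mem_coe, Set.Finite.mem_toFinset]
      exact ⟨x.1, hPx, by rw [Prod.ext_iff]; exact ⟨rfl, hxx⟩⟩
    rw [finsum_eq_sum_of_support_subset _ hsub,
      Finset.sum_image (fun a _ b _ h => by simpa using congrArg Prod.fst h)]
    have : ∀ i ∈ hPfin.toFinset, D (i, i) * Real.log (D (i, i)) = P i * Real.log (P i) := by
      intro i _; simp [hDdef]
    rw [Finset.sum_congr rfl this]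
    exact (finsum_eq_sum_of_support_subset _ (by
      intro i hi
      simp only [mem_support] at hi
      simp only [Finset.coe_sort_coe, Set.Finite.coe_toFinset, mem_support, Finset.mem_coe,
        Set.Finite.mem_toFinset]
      intro h; exact hi (by rw [h, zero_mul]))).symm
  rw [hent]; ring

/-! ### Gluing lemma for the triangle inequality -/

lemma glue {P Q R : ℕ → ℝ} {S₁ S₂ : ℕ × ℕ → ℝ}
    (h1 : MemCouplingN P Q S₁) (h2 : MemCouplingN Q R S₂) :
    ∃ S₃ : ℕ × ℕ → ℝ, MemCouplingN P R S₃ ∧ vi P R S₃ ≤ vi P Q S₁ + vi Q R S₂ := by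
  classical
  have hS1Q : ∀ x : ℕ × ℕ, S₁ x ≤ Q x.2 := coupling_le_snd h1
  have hS2Q : ∀ x : ℕ × ℕ, S₂ x ≤ Q x.1 := coupling_le_fst h2
  obtain ⟨h10, h1fin, h1P, h1Q⟩ := h1
  obtain ⟨h20, h2fin, h2Q, h2R⟩ := h2
  have hQ0 : ∀ j, 0 ≤ Q j := fun j => (h1Q j) ▸ finsum_nonneg (fun i => h10 _)
  set U : (ℕ × ℕ) × ℕ → ℝ := fun u => S₁ (u.1.1, u.2) * S₂ (u.2, u.1.2) / Q u.2 with hUdef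
  set S₃ : ℕ × ℕ → ℝ := fun x => ∑ᶠ j, U (x, j) with hS3def
  have hU0 : ∀ u, 0 ≤ U u := fun u =>
    div_nonneg (mul_nonneg (h10 _) (h20 _)) (hQ0 _)
  -- nonvanishing consequences
  have hU_ne : ∀ u : (ℕ × ℕ) × ℕ, U u ≠ 0 →
      S₁ (u.1.1, u.2) ≠ 0 ∧ S₂ (u.2, u.1.2) ≠ 0 ∧ Q u.2 ≠ 0 := by
    intro u h
    refine ⟨fun h0 => h ?_, fun h0 => h ?_, fun h0 => h ?_⟩
    · simp [hUdef, h0]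
    · simp [hUdef, h0]
    · simp [hUdef, h0]
  have hUfin : (support U).Finite := by
    refine (((h1fin.prod h2fin)).image
      fun p : (ℕ × ℕ) × (ℕ × ℕ) => ((p.1.1, p.2.2), p.1.2)).subset fun u hu => ?_
    obtain ⟨hu1, hu2, _⟩ := hU_ne u hu
    exact ⟨((u.1.1, u.2), (u.2, u.1.2)), ⟨hu1, hu2⟩, rfl⟩
  -- finsets
  set A : Finset ℕ := h1fin.toFinset.image Prod.fst with hA
  set B : Finset ℕ := h1fin.toFinset.image Prod.snd ∪ h2fin.toFinset.image Prod.fst with hB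
  set C : Finset ℕ := h2fin.toFinset.image Prod.snd with hC
  have mA : ∀ i j : ℕ, S₁ (i, j) ≠ 0 → i ∈ A := by
    intro i j h
    simp only [hA, Finset.mem_image, Set.Finite.mem_toFinset]
    exact ⟨(i, j), h, rfl⟩
  have mB1 : ∀ i j : ℕ, S₁ (i, j) ≠ 0 → j ∈ B := by
    intro i j h
    simp only [hB, Finset.mem_union, Finset.mem_image, Set.Finite.mem_toFinset]
    exact Or.inl ⟨(i, j), h, rfl⟩
  have mB2 : ∀ j k : ℕ, S₂ (j, k) ≠ 0 → j ∈ B := by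
    intro j k h
    simp only [hB, Finset.mem_union, Finset.mem_image, Set.Finite.mem_toFinset]
    exact Or.inr ⟨(j, k), h, rfl⟩
  have mC : ∀ j k : ℕ, S₂ (j, k) ≠ 0 → k ∈ C := by
    intro j k h
    simp only [hC, Finset.mem_image, Set.Finite.mem_toFinset]
    exact ⟨(j, k), h, rfl⟩
  -- bridges
  have bs1 : ∀ i, ∑ᶠ j, S₁ (i, j) = ∑ j ∈ B, S₁ (i, j) := by
    intro i
    exact finsum_eq_sum_of_support_subset _ fun j hj => mB1 i j hj
  have bs1' : ∀ j, ∑ᶠ i, S₁ (i, j) = ∑ i ∈ A, S₁ (i, j) := by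
    intro j
    exact finsum_eq_sum_of_support_subset _ fun i hi => mA i j hi
  have bs2 : ∀ j, ∑ᶠ k, S₂ (j, k) = ∑ k ∈ C, S₂ (j, k) := by
    intro j
    exact finsum_eq_sum_of_support_subset _ fun k hk => mC j k hk
  have bs2' : ∀ k, ∑ᶠ j, S₂ (j, k) = ∑ j ∈ B, S₂ (j, k) := by
    intro k
    exact finsum_eq_sum_of_support_subset _ fun j hj => mB2 j k hj
  have bsU : ∀ x : ℕ × ℕ, S₃ x = ∑ j ∈ B, U (x, j) := by
    intro x
    exact finsum_eq_sum_of_support_subset _ fun j hj => mB1 x.1 j (hU_ne (x, j) hj).1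
  -- slice sums
  have slice1 : ∀ i j : ℕ, ∑ k ∈ C, U ((i, k), j) = S₁ (i, j) := by
    intro i j
    have : ∀ k, U ((i, k), j) = (S₁ (i, j) / Q j) * S₂ (j, k) := by
      intro k; simp only [hUdef]; ring
    rw [Finset.sum_congr rfl fun k _ => this k, ← Finset.mul_sum, ← bs2 j, h2Q j]
    rcases eq_or_ne (Q j) 0 with h | h
    · have : S₁ (i, j) = 0 :=
        le_antisymm (by have := hS1Q (i, j); rwa [h] at this) (h10 _)
      rw [this, h]; simp
    · field_simp
  have slice2 : ∀ j k : ℕ, ∑ i ∈ A, U ((i, k), j) = S₂ (j, k) := by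
    intro j k
    have : ∀ i, U ((i, k), j) = (S₂ (j, k) / Q j) * S₁ (i, j) := by
      intro i; simp only [hUdef]; ring
    rw [Finset.sum_congr rfl fun i _ => this i, ← Finset.mul_sum, ← bs1' j, h1Q j]
    rcases eq_or_ne (Q j) 0 with h | h
    · have : S₂ (j, k) = 0 :=
        le_antisymm (by have := hS2Q (j, k); rwa [h] at this) (h20 _)
      rw [this, h]; simp
    · field_simp
  -- S₃ is a coupling of P and R
  have hS3ne : ∀ x : ℕ × ℕ, S₃ x ≠ 0 → ∃ j, U (x, j) ≠ 0 := by
    intro x hx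
    by_contra h
    push_neg at h
    exact hx (finsum_eq_zero_of_forall_eq_zero h)
  have h3 : MemCouplingN P R S₃ := by
    refine ⟨fun x => finsum_nonneg fun j => hU0 _, ?_, ?_, ?_⟩
    · refine (hUfin.image Prod.fst).subset fun x hx => ?_
      obtain ⟨j, hj⟩ := hS3ne x hx
      exact ⟨(x, j), hj, rfl⟩
    · intro i
      have hsupp : (support fun k => S₃ (i, k)) ⊆ ↑C := by
        intro k hk
        obtain ⟨j, hj⟩ := hS3ne (i, k) hk
        exact mC j k (hU_ne ((i, k), j) hj).2.1
      rw [finsum_eq_sum_of_support_subset _ hsupp]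
      calc ∑ k ∈ C, S₃ (i, k) = ∑ k ∈ C, ∑ j ∈ B, U ((i, k), j) :=
            Finset.sum_congr rfl fun k _ => bsU (i, k)
        _ = ∑ j ∈ B, ∑ k ∈ C, U ((i, k), j) := Finset.sum_comm
        _ = ∑ j ∈ B, S₁ (i, j) := Finset.sum_congr rfl fun j _ => slice1 i j
        _ = P i := by rw [← bs1 i, h1P i]
    · intro k
      have hsupp : (support fun i => S₃ (i, k)) ⊆ ↑A := by
        intro i hi
        obtain ⟨j, hj⟩ := hS3ne (i, k) hi
        exact mA i j (hU_ne ((i, k), j) hj).1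
      rw [finsum_eq_sum_of_support_subset _ hsupp]
      calc ∑ i ∈ A, S₃ (i, k) = ∑ i ∈ A, ∑ j ∈ B, U ((i, k), j) :=
            Finset.sum_congr rfl fun i _ => bsU (i, k)
        _ = ∑ j ∈ B, ∑ i ∈ A, U ((i, k), j) := Finset.sum_comm
        _ = ∑ j ∈ B, S₂ (j, k) := Finset.sum_congr rfl fun j _ => slice2 j k
        _ = R k := by rw [← bs2' k, h2R k]
  refine ⟨S₃, h3, ?_⟩
  -- entropy computation
  have hUsub : support U ⊆ ↑((A ×ˢ C) ×ˢ B) := by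
    intro u hu
    obtain ⟨hu1, hu2, _⟩ := hU_ne u hu
    simp only [Finset.coe_product, Set.mem_prod]
    exact ⟨⟨mA _ _ hu1, mC _ _ hu2⟩, mB1 _ _ hu1⟩
  have key : ∀ u : (ℕ × ℕ) × ℕ, U u * Real.log (U u) =
      U u * Real.log (S₁ (u.1.1, u.2)) + U u * Real.log (S₂ (u.2, u.1.2))
        - U u * Real.log (Q u.2) := by
    intro u
    rcases eq_or_ne (U u) 0 with h | h
    · rw [h]; ring
    · obtain ⟨e1, e2, e3⟩ := hU_ne u h
      have : Real.log (U u) = Real.log (S₁ (u.1.1, u.2)) + Real.log (S₂ (u.2, u.1.2))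
          - Real.log (Q u.2) := by
        have : U u = S₁ (u.1.1, u.2) * S₂ (u.2, u.1.2) / Q u.2 := rfl
        rw [this, Real.log_div (mul_ne_zero e1 e2) e3, Real.log_mul e1 e2]
      rw [this]; ring
  have hfin1 : (support fun u => U u * Real.log (S₁ (u.1.1, u.2))).Finite :=
    hUfin.subset (supp_mul_log_subset _ _)
  have hfin2 : (support fun u => U u * Real.log (S₂ (u.2, u.1.2))).Finite :=
    hUfin.subset (supp_mul_log_subset _ _)
  have hfin3 : (support fun u => U u * Real.log (Q u.2)).Finite :=
    hUfin.subset (supp_mul_log_subset _ _)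
  have hfin12 : (support fun u => U u * Real.log (S₁ (u.1.1, u.2)) +
      U u * Real.log (S₂ (u.2, u.1.2))).Finite := by
    refine hUfin.subset fun u hu => ?_
    simp only [mem_support] at hu ⊢
    intro h; exact hu (by rw [h]; ring)
  -- the three partial sums
  have T1 : ∑ᶠ u, U u * Real.log (S₁ (u.1.1, u.2)) = ∑ᶠ x, S₁ x * Real.log (S₁ x) := by
    rw [finsum_eq_sum_of_support_subset _
      (Set.Subset.trans (supp_mul_log_subset _ _) hUsub),
      Finset.sum_product, Finset.sum_product]
    have step : ∀ i ∈ A, ∑ k ∈ C, ∑ j ∈ B, U ((i, k), j) * Real.log (S₁ (i, j)) =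
        ∑ j ∈ B, S₁ (i, j) * Real.log (S₁ (i, j)) := by
      intro i _
      rw [Finset.sum_comm]
      refine Finset.sum_congr rfl fun j _ => ?_
      rw [← Finset.sum_mul, slice1 i j]
    rw [Finset.sum_congr rfl step]
    rw [(finsum_eq_sum_of_support_subset (fun x : ℕ × ℕ => S₁ x * Real.log (S₁ x))
      (s := A ×ˢ B) ?_), Finset.sum_product]
    intro x hx
    have : S₁ x ≠ 0 := by
      intro h
      simp only [mem_support] at hx
      exact hx (by rw [h, zero_mul])
    simp only [Finset.coe_product, Set.mem_prod]
    exact ⟨mA x.1 x.2 (by rwa [Prod.mk.eta]), mB1 x.1 x.2 (by rwa [Prod.mk.eta])⟩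
  have T2 : ∑ᶠ u, U u * Real.log (S₂ (u.2, u.1.2)) = ∑ᶠ x, S₂ x * Real.log (S₂ x) := by
    rw [finsum_eq_sum_of_support_subset _
      (Set.Subset.trans (supp_mul_log_subset _ _) hUsub),
      Finset.sum_product, Finset.sum_product]
    have step : ∀ j ∈ B, ∑ i ∈ A, ∑ k ∈ C, U ((i, k), j) * Real.log (S₂ (j, k)) =
        ∑ k ∈ C, S₂ (j, k) * Real.log (S₂ (j, k)) := by
      intro j _
      rw [Finset.sum_comm]
      refine Finset.sum_congr rfl fun k _ => ?_
      rw [← Finset.sum_mul, slice2 j k]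
    calc ∑ i ∈ A, ∑ k ∈ C, ∑ j ∈ B, U ((i, k), j) * Real.log (S₂ (j, k))
        = ∑ i ∈ A, ∑ j ∈ B, ∑ k ∈ C, U ((i, k), j) * Real.log (S₂ (j, k)) :=
          Finset.sum_congr rfl fun i _ => Finset.sum_comm
      _ = ∑ j ∈ B, ∑ i ∈ A, ∑ k ∈ C, U ((i, k), j) * Real.log (S₂ (j, k)) :=
          Finset.sum_comm
      _ = ∑ j ∈ B, ∑ k ∈ C, S₂ (j, k) * Real.log (S₂ (j, k)) :=
          Finset.sum_congr rfl step
      _ = ∑ᶠ x, S₂ x * Real.log (S₂ x) := by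
          rw [(finsum_eq_sum_of_support_subset (fun x : ℕ × ℕ => S₂ x * Real.log (S₂ x))
            (s := B ×ˢ C) ?_), Finset.sum_product]
          intro x hx
          have : S₂ x ≠ 0 := by
            intro h
            simp only [mem_support] at hx
            exact hx (by rw [h, zero_mul])
          simp only [Finset.coe_product, Set.mem_prod]
          exact ⟨mB2 x.1 x.2 (by rwa [Prod.mk.eta]), mC x.1 x.2 (by rwa [Prod.mk.eta])⟩
  have T3 : ∑ᶠ u, U u * Real.log (Q u.2) = ∑ᶠ j, Q j * Real.log (Q j) := by
    rw [finsum_eq_sum_of_support_subset _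
      (Set.Subset.trans (supp_mul_log_subset _ _) hUsub),
      Finset.sum_product, Finset.sum_product]
    have step : ∀ i ∈ A, ∑ k ∈ C, ∑ j ∈ B, U ((i, k), j) * Real.log (Q j) =
        ∑ j ∈ B, S₁ (i, j) * Real.log (Q j) := by
      intro i _
      rw [Finset.sum_comm]
      refine Finset.sum_congr rfl fun j _ => ?_
      rw [← Finset.sum_mul, slice1 i j]
    rw [Finset.sum_congr rfl step, Finset.sum_comm]
    have step2 : ∀ j ∈ B, ∑ i ∈ A, S₁ (i, j) * Real.log (Q j) = Q j * Real.log (Q j) := by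
      intro j _
      rw [← Finset.sum_mul, ← bs1' j, h1Q j]
    rw [Finset.sum_congr rfl step2]
    refine (finsum_eq_sum_of_support_subset _ ?_).symm
    intro j hj
    have hQj : Q j ≠ 0 := by
      intro h
      simp only [mem_support] at hj
      exact hj (by rw [h, zero_mul])
    have : ∃ i, S₁ (i, j) ≠ 0 := by
      by_contra h
      push_neg at h
      exact hQj (by rw [← h1Q j]; exact finsum_eq_zero_of_forall_eq_zero h)
    obtain ⟨i, hi⟩ := this
    exact mB1 i j hi
  -- entropy of U
  have HU : ∑ᶠ u, U u * Real.log (U u) =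
      (∑ᶠ x, S₁ x * Real.log (S₁ x)) + (∑ᶠ x, S₂ x * Real.log (S₂ x))
        - ∑ᶠ j, Q j * Real.log (Q j) := by
    calc ∑ᶠ u, U u * Real.log (U u)
        = ∑ᶠ u, (U u * Real.log (S₁ (u.1.1, u.2)) + U u * Real.log (S₂ (u.2, u.1.2))
            - U u * Real.log (Q u.2)) := finsum_congr key
      _ = (∑ᶠ u, (U u * Real.log (S₁ (u.1.1, u.2)) + U u * Real.log (S₂ (u.2, u.1.2))))
            - ∑ᶠ u, U u * Real.log (Q u.2) := finsum_sub_distrib hfin12 hfin3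
      _ = (∑ᶠ u, U u * Real.log (S₁ (u.1.1, u.2))) + (∑ᶠ u, U u * Real.log (S₂ (u.2, u.1.2)))
            - ∑ᶠ u, U u * Real.log (Q u.2) := by rw [finsum_add_distrib hfin1 hfin2]
      _ = _ := by rw [T1, T2, T3]
  -- marginal entropy inequality
  have hmarg : entN2 S₃ ≤ -∑ᶠ u, U u * Real.log (U u) := by
    have := ent_marg_fst (S := U) hU0 hUfin
    simpa only [entN2, hS3def] using this
  -- Q is a finitely supported prob-like function for entropy accounting
  have hQent : entN Q = -∑ᶠ j, Q j * Real.log (Q j) := rfl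
  rw [vi_eq h3, vi_eq ⟨h10, h1fin, h1P, h1Q⟩, vi_eq ⟨h20, h2fin, h2Q, h2R⟩]
  have hHU : -∑ᶠ u, U u * Real.log (U u) = entN2 S₁ + entN2 S₂ - entN Q := by
    rw [HU]; simp only [entN2, entN]; ring
  rw [hHU] at hmarg
  linarith

/-! ### Main theorem -/

lemma cSet_nonempty {P Q : ℕ → ℝ} (hP : IsFinProb P) (hQ : IsFinProb Q) :
    {d : ℝ | ∃ S : ℕ × ℕ → ℝ, MemCouplingN P Q S ∧ d = vi P Q S}.Nonempty :=
  ⟨vi P Q (fun x => P x.1 * Q x.2), fun x => P x.1 * Q x.2, prod_coupling hP hQ, rfl⟩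

lemma cSet_bdd (P Q : ℕ → ℝ) :
    BddBelow {d : ℝ | ∃ S : ℕ × ℕ → ℝ, MemCouplingN P Q S ∧ d = vi P Q S} :=
  ⟨0, fun d ⟨S, hS, hd⟩ => hd ▸ vi_nonneg hS⟩

lemma viDist_nonneg' {P Q : ℕ → ℝ} (hP : IsFinProb P) (hQ : IsFinProb Q) :
    0 ≤ viDist P Q :=
  le_csInf (cSet_nonempty hP hQ) fun d ⟨S, hS, hd⟩ => hd ▸ vi_nonneg hS

/-- the triangle inequality for `Δ̲`; together with nonnegativity,
symmetry and `Δ̲(P,P) = 0`, this makes `Δ̲` a pseudometric on finitely supported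
probability distributions on `ℕ`. -/
theorem viDist_pseudometric (P Q R : ℕ → ℝ)
    (hP : IsFinProb P) (hQ : IsFinProb Q) (hR : IsFinProb R) :
    viDist P R ≤ viDist P Q + viDist Q R ∧
    0 ≤ viDist P Q ∧ viDist P Q = viDist Q P ∧ viDist P P = 0 := by
  refine ⟨?_, viDist_nonneg' hP hQ, ?_, ?_⟩
  · -- triangle inequality
    rw [← sub_le_iff_le_add']
    refine le_csInf (cSet_nonempty hQ hR) fun b ⟨S₂, hS₂, hb⟩ => ?_
    rw [sub_le_iff_le_add']
    rw [← sub_le_iff_le_add]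
    refine le_csInf (cSet_nonempty hP hQ) fun a ⟨S₁, hS₁, ha⟩ => ?_
    rw [sub_le_iff_le_add]
    obtain ⟨S₃, hS₃, hle⟩ := glue hS₁ hS₂
    calc viDist P R ≤ vi P R S₃ := csInf_le (cSet_bdd P R) ⟨S₃, hS₃, rfl⟩
      _ ≤ vi P Q S₁ + vi Q R S₂ := hle
      _ = a + b := by rw [ha, hb]
  · -- symmetry
    unfold viDist
    congr 1
    ext d
    constructor
    · rintro ⟨S, hS, rfl⟩
      exact ⟨fun y => S (y.2, y.1), coupling_swap hS, (vi_swap P Q S).symm⟩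
    · rintro ⟨S, hS, rfl⟩
      exact ⟨fun y => S (y.2, y.1), coupling_swap hS, (vi_swap Q P S).symm⟩
  · -- viDist P P = 0
    refine le_antisymm ?_ (viDist_nonneg' hP hP)
    have := csInf_le (cSet_bdd P P)
      (⟨fun x : ℕ × ℕ => if x.1 = x.2 then P x.1 else 0, diag_coupling hP, rfl⟩ :
        vi P P (fun x : ℕ × ℕ => if x.1 = x.2 then P x.1 else 0) ∈
          {d : ℝ | ∃ S : ℕ × ℕ → ℝ, MemCouplingN P P S ∧ d = vi P P S})
    rwa [vi_diag hP] at this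
end

section
/- Let m ≥ 1 and let d_1, …, d_{3m} and k be positive integers with k/4 < d_j < k/2 for all j and ∑_{j=1}^{3m} d_j = mk. Set p_i = d_i/(mk) and P = (p_1, …, p_{3m}). Then there exists a partition of {1, …, 3m} into m pairwise disjoint subsets covering {1, …, 3m} with equal sums ∑_{j∈J_r} d_j if and only if there exists a matrix S ∈ C(P,m) with I(S) = log m. -/
open Finset Real

/-- Membership in `C(P,m)`: `n × m` matrices with nonnegative entries and row sums `P`
(the column marginal is unconstrained). -/
def MemCouplingRow {n m : ℕ} (P : Fin n → ℝ) (S : Fin n → Fin m → ℝ) : Prop :=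
  (∀ i j, 0 ≤ S i j) ∧ (∀ i, ∑ j, S i j = P i)

/-- The column marginal `Q(S)` of a matrix `S`. -/
noncomputable def colMarginal {n m : ℕ} (S : Fin n → Fin m → ℝ) : Fin m → ℝ :=
  fun j => ∑ i, S i j

/-- Mutual information of `S ∈ C(P,m)`: `I(S) = ∑ sᵢⱼ log(sᵢⱼ/(pᵢ qⱼ))` with
`qⱼ = ∑ᵢ sᵢⱼ` (terms with `sᵢⱼ = 0` vanish). -/
noncomputable def mutInfoRow {n m : ℕ} (P : Fin n → ℝ) (S : Fin n → Fin m → ℝ) : ℝ :=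
  ∑ i, ∑ j, S i j * Real.log (S i j / (P i * colMarginal S j))

set_option maxHeartbeats 2000000 in
/-- reduction of 3-Partition to Optimal Channel: an equal-sums
partition exists iff some `S ∈ C(P,m)` with `P = (dᵢ/(mk))` achieves
`I(S) = log m`. -/
theorem three_partition_iff_optimal_channel (m : ℕ) (hm : 1 ≤ m)
    (d : Fin (3 * m) → ℕ) (k : ℕ) (hd : ∀ j, 0 < d j) (hk : 0 < k)
    (hlow : ∀ j, k < 4 * d j) (hhigh : ∀ j, 2 * d j < k)
    (hsum : ∑ j, d j = m * k) :
    (∃ J : Fin m → Finset (Fin (3 * m)),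
      (∀ r r' : Fin m, r ≠ r' → Disjoint (J r) (J r')) ∧
      (Finset.univ : Finset (Fin (3 * m))) = Finset.univ.biUnion J ∧
      (∀ r r' : Fin m, ∑ j ∈ J r, d j = ∑ j ∈ J r', d j)) ↔
    (∃ S : Fin (3 * m) → Fin m → ℝ,
      MemCouplingRow (fun i => (d i : ℝ) / ((m * k : ℕ) : ℝ)) S ∧
      mutInfoRow (fun i => (d i : ℝ) / ((m * k : ℕ) : ℝ)) S = Real.log m) := by
  have hm0 : 0 < m := hm
  have hmk : 0 < m * k := Nat.mul_pos hm0 hk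
  set c : ℝ := ((m * k : ℕ) : ℝ) with hc_def
  have hc : 0 < c := by rw [hc_def]; exact_mod_cast hmk
  have hmR : (0:ℝ) < m := by exact_mod_cast hm0
  have hkR : (0:ℝ) < k := by exact_mod_cast hk
  set P : Fin (3 * m) → ℝ := fun i => (d i : ℝ) / c with hP_def
  have hP : ∀ i, 0 < P i := fun i => div_pos (by exact_mod_cast hd i) hc
  have hPsum : ∑ i, P i = 1 := by
    simp only [hP_def]
    rw [← Finset.sum_div, div_eq_one_iff_eq (ne_of_gt hc), hc_def]
    exact_mod_cast hsum
  constructor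
  · -- forward
    rintro ⟨J, hdisj, hcov, heq⟩
    -- each block sums to k
    have hsum_blocks : ∑ r : Fin m, ∑ j ∈ J r, d j = m * k := by
      rw [← hsum, hcov, Finset.sum_biUnion]
      intro r _ r' _ hrr'
      exact hdisj r r' hrr'
    have r0 : Fin m := ⟨0, hm0⟩
    have hblock : ∀ r, ∑ j ∈ J r, d j = k := by
      intro r
      have h1 : ∑ r' : Fin m, ∑ j ∈ J r', d j = m * (∑ j ∈ J r, d j) := by
        rw [Finset.sum_congr rfl (fun r' _ => heq r' r), Finset.sum_const,
          Finset.card_univ, Fintype.card_fin, smul_eq_mul]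
      exact Nat.eq_of_mul_eq_mul_left hm0 (h1.symm.trans hsum_blocks)
    -- unique membership
    have hmem : ∀ i : Fin (3 * m), ∃ r, i ∈ J r := by
      intro i
      have : i ∈ Finset.univ.biUnion J := by rw [← hcov]; exact Finset.mem_univ i
      simpa using Finset.mem_biUnion.mp this
    have huniq : ∀ i r r', i ∈ J r → i ∈ J r' → r = r' := by
      intro i r r' h1 h2
      by_contra hne
      exact (Finset.disjoint_left.mp (hdisj r r' hne) h1) h2
    refine ⟨fun i j => if i ∈ J j then P i else 0, ⟨fun i j => by positivity, ?_⟩, ?_⟩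
    · intro i
      obtain ⟨r, hr⟩ := hmem i
      rw [Finset.sum_eq_single_of_mem r (Finset.mem_univ r)]
      · simp [hr]
      · intro b _ hb
        simp only [ite_eq_right_iff]
        intro hbmem
        exact absurd (huniq i b r hbmem hr) hb
    · -- mutual info
      have hQ : ∀ j, colMarginal (fun i j => if i ∈ J j then P i else 0) j = 1 / m := by
        intro j
        simp only [colMarginal]
        rw [Finset.sum_ite_mem, Finset.univ_inter]
        simp only [hP_def]
        rw [← Finset.sum_div]
        have : (∑ i ∈ J j, (d i : ℝ)) = (k : ℝ) := by exact_mod_cast hblock j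
        rw [this, hc_def]
        push_cast
        field_simp
      simp only [mutInfoRow]
      have hrow_val : ∀ i, ∑ j, (if i ∈ J j then P i else 0) *
          Real.log ((if i ∈ J j then P i else 0) /
            (P i * colMarginal (fun i j => if i ∈ J j then P i else 0) j)) =
          P i * Real.log m := by
        intro i
        obtain ⟨r, hr⟩ := hmem i
        rw [Finset.sum_eq_single_of_mem r (Finset.mem_univ r)]
        · rw [if_pos hr, hQ r]
          have hPi := hP i
          have : P i / (P i * (1 / (m:ℝ))) = m := by field_simp
          rw [this]
        · intro b _ hb
          have : i ∉ J b := fun h => hb (huniq i b r h hr)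
          simp [this]
      rw [Finset.sum_congr rfl (fun i _ => hrow_val i), ← Finset.sum_mul, hPsum, one_mul]
  · -- backward
    rintro ⟨S, ⟨hnn, hrow⟩, hI⟩
    set Q : Fin m → ℝ := colMarginal S with hQ_def
    have hQnn : ∀ j, 0 ≤ Q j := fun j => Finset.sum_nonneg fun i _ => hnn i j
    have hQsum : ∑ j, Q j = 1 := by
      simp only [hQ_def, colMarginal]
      rw [Finset.sum_comm]
      rw [Finset.sum_congr rfl (fun i _ => hrow i), hPsum]
    have hSP : ∀ i j, S i j ≤ P i := by
      intro i j
      rw [← hrow i]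
      exact Finset.single_le_sum (fun j' _ => hnn i j') (Finset.mem_univ j)
    have hSQ : ∀ i j, S i j ≤ Q j := by
      intro i j
      exact Finset.single_le_sum (fun i' _ => hnn i' j) (Finset.mem_univ i)
    -- decomposition
    have hdecomp : ∀ i j, S i j * Real.log (S i j / (P i * Q j)) =
        S i j * Real.log (S i j) - S i j * Real.log (P i) - S i j * Real.log (Q j) := by
      intro i j
      rcases eq_or_lt_of_le (hnn i j) with h | h
      · simp [← h]
      · have hQj : 0 < Q j := lt_of_lt_of_le h (hSQ i j)
        rw [Real.log_div (ne_of_gt h) (ne_of_gt (mul_pos (hP i) hQj)),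
          Real.log_mul (ne_of_gt (hP i)) (ne_of_gt hQj)]
        ring
    have hIrw : mutInfoRow P S =
        (∑ i, ∑ j, S i j * Real.log (S i j)) - (∑ i, P i * Real.log (P i))
          - (∑ j, Q j * Real.log (Q j)) := by
      simp only [mutInfoRow, ← hQ_def]
      rw [Finset.sum_congr rfl (fun i _ => Finset.sum_congr rfl (fun j _ => hdecomp i j))]
      have e1 : ∀ i, ∑ j, (S i j * Real.log (S i j) - S i j * Real.log (P i)
          - S i j * Real.log (Q j)) =
          (∑ j, S i j * Real.log (S i j)) - P i * Real.log (P i)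
          - (∑ j, S i j * Real.log (Q j)) := by
        intro i
        rw [Finset.sum_sub_distrib, Finset.sum_sub_distrib, ← Finset.sum_mul, hrow i]
      rw [Finset.sum_congr rfl (fun i _ => e1 i), Finset.sum_sub_distrib,
        Finset.sum_sub_distrib]
      congr 1
      rw [Finset.sum_comm]
      exact Finset.sum_congr rfl (fun j _ => by rw [← Finset.sum_mul]; rfl)
    -- key inequalities
    have hAB : ∀ i j, S i j * Real.log (S i j) ≤ S i j * Real.log (P i) := by
      intro i j
      rcases eq_or_lt_of_le (hnn i j) with h | h
      · rw [← h]; simp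
      · exact mul_le_mul_of_nonneg_left
          (Real.log_le_log (by exact h) (hSP i j)) (le_of_lt h)
    have hA_le_B : (∑ i, ∑ j, S i j * Real.log (S i j)) ≤ ∑ i, P i * Real.log (P i) := by
      apply Finset.sum_le_sum
      intro i _
      calc ∑ j, S i j * Real.log (S i j) ≤ ∑ j, S i j * Real.log (P i) :=
            Finset.sum_le_sum (fun j _ => hAB i j)
        _ = P i * Real.log (P i) := by rw [← Finset.sum_mul, hrow i]
    have hCineq : ∀ j : Fin m, -(Q j * Real.log (Q j)) - Q j * Real.log m
        ≤ 1 / m - Q j := by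
      intro j
      rcases eq_or_lt_of_le (hQnn j) with h | h
      · rw [← h]; simp
      · have hx : (0:ℝ) < 1 / ((m:ℝ) * Q j) := by positivity
        have hlog := Real.log_le_sub_one_of_pos hx
        have h2 : Real.log (1 / ((m:ℝ) * Q j)) =
            -Real.log m - Real.log (Q j) := by
          rw [one_div, Real.log_inv, Real.log_mul (ne_of_gt hmR) (ne_of_gt h)]
          ring
        have h3 : Q j * Real.log (1 / ((m:ℝ) * Q j)) ≤ Q j * (1 / ((m:ℝ) * Q j) - 1) :=
          mul_le_mul_of_nonneg_left hlog (le_of_lt h)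
        have h4 : Q j * (1 / ((m:ℝ) * Q j) - 1) = 1 / m - Q j := by
          rw [mul_sub, mul_one, mul_one_div, mul_comm ((m:ℝ)) (Q j),
            div_mul_eq_div_div, div_self (ne_of_gt h)]
        rw [h4] at h3
        calc -(Q j * Real.log (Q j)) - Q j * Real.log m
            = Q j * Real.log (1 / ((m:ℝ) * Q j)) := by rw [h2]; ring
          _ ≤ 1 / m - Q j := h3
    have hCsum : ∑ j : Fin m, (1 / (m:ℝ) - Q j) = 0 := by
      rw [Finset.sum_sub_distrib, hQsum, Finset.sum_const, Finset.card_univ,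
        Fintype.card_fin, nsmul_eq_mul]
      field_simp
      ring
    have hC_le : (∑ j, (-(Q j * Real.log (Q j)) - Q j * Real.log m)) ≤ 0 := by
      calc (∑ j, (-(Q j * Real.log (Q j)) - Q j * Real.log m))
          ≤ ∑ j : Fin m, (1 / (m:ℝ) - Q j) := Finset.sum_le_sum (fun j _ => hCineq j)
        _ = 0 := hCsum
    have hCsum2 : (∑ j, (-(Q j * Real.log (Q j)) - Q j * Real.log m)) =
        -(∑ j, Q j * Real.log (Q j)) - Real.log m := by
      rw [Finset.sum_sub_distrib, ← Finset.sum_mul, hQsum, Finset.sum_neg_distrib]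
      ring
    -- combine
    rw [hIrw] at hI
    have hAeqB : (∑ i, ∑ j, S i j * Real.log (S i j)) = ∑ i, P i * Real.log (P i) := by
      nlinarith [hC_le, hCsum2, hA_le_B]
    have hCeq : (∑ j, (-(Q j * Real.log (Q j)) - Q j * Real.log m)) = 0 := by
      nlinarith [hC_le, hCsum2, hA_le_B]
    -- determinism
    have hdet : ∀ i j, S i j = 0 ∨ S i j = P i := by
      intro i j
      have houter := (Finset.sum_eq_sum_iff_of_le (fun i _ =>
        (calc ∑ j, S i j * Real.log (S i j) ≤ ∑ j, S i j * Real.log (P i) :=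
            Finset.sum_le_sum (fun j _ => hAB i j)
          _ = P i * Real.log (P i) := by rw [← Finset.sum_mul, hrow i]))).mp
        hAeqB i (Finset.mem_univ i)
      have houter' : ∑ j, S i j * Real.log (S i j) = ∑ j, S i j * Real.log (P i) := by
        rw [houter, ← Finset.sum_mul, hrow i]
      have hinner := (Finset.sum_eq_sum_iff_of_le (fun j _ => hAB i j)).mp houter' j
        (Finset.mem_univ j)
      rcases eq_or_lt_of_le (hnn i j) with h | h
      · exact Or.inl h.symm
      · right
        have hlogeq : Real.log (S i j) = Real.log (P i) :=
          mul_left_cancel₀ (ne_of_gt h) hinner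
        have := Real.exp_log h
        rw [hlogeq, Real.exp_log (hP i)] at this
        exact this.symm
    -- uniform Q
    have hQuni : ∀ j, Q j = 1 / m := by
      intro j
      have heach := (Finset.sum_eq_sum_iff_of_le (fun j _ => hCineq j)).mp
        (hCeq.trans hCsum.symm) j (Finset.mem_univ j)
      rcases eq_or_lt_of_le (hQnn j) with h | h
      · exfalso
        rw [← h] at heach
        have heach2 : (0:ℝ) = 1 / m := by
          have h0 : Real.log (0:ℝ) = 0 := Real.log_zero
          rw [h0] at heach
          linarith [heach]
        exact absurd heach2.symm (by positivity)
      · by_contra hne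
        have hx : (0:ℝ) < 1 / ((m:ℝ) * Q j) := by positivity
        have hxne : 1 / ((m:ℝ) * Q j) ≠ 1 := by
          intro hcon
          apply hne
          have hcon' : (1:ℝ) = (m:ℝ) * Q j :=
            (div_eq_one_iff_eq (by positivity)).mp hcon
          rw [eq_div_iff (ne_of_gt hmR)]
          nlinarith [hcon']
        have hlt := Real.log_lt_sub_one_of_pos hx hxne
        have h2 : Real.log (1 / ((m:ℝ) * Q j)) =
            -Real.log m - Real.log (Q j) := by
          rw [one_div, Real.log_inv, Real.log_mul (ne_of_gt hmR) (ne_of_gt h)]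
          ring
        have h3 : Q j * Real.log (1 / ((m:ℝ) * Q j)) < Q j * (1 / ((m:ℝ) * Q j) - 1) :=
          (mul_lt_mul_iff_right₀ h).mpr hlt
        have h4 : Q j * (1 / ((m:ℝ) * Q j) - 1) = 1 / m - Q j := by
          rw [mul_sub, mul_one, mul_one_div, mul_comm ((m:ℝ)) (Q j),
            div_mul_eq_div_div, div_self (ne_of_gt h)]
        have h5 : -(Q j * Real.log (Q j)) - Q j * Real.log m
            = Q j * Real.log (1 / ((m:ℝ) * Q j)) := by rw [h2]; ring
        rw [h5] at heach
        rw [h4] at h3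
        linarith
    -- build the partition
    refine ⟨fun r => Finset.univ.filter (fun i => S i r ≠ 0), ?_, ?_, ?_⟩
    · intro r r' hrr'
      rw [Finset.disjoint_left]
      intro i hi hi'
      simp only [Finset.mem_filter] at hi hi'
      have h1 : S i r = P i := (hdet i r).resolve_left hi.2
      have h2 : S i r' = P i := (hdet i r').resolve_left hi'.2
      have hsub : ({r, r'} : Finset (Fin m)) ⊆ Finset.univ := Finset.subset_univ _
      have hle : S i r + S i r' ≤ ∑ j, S i j := by
        rw [← Finset.sum_pair hrr']
        exact Finset.sum_le_sum_of_subset_of_nonneg hsub (fun j _ _ => hnn i j)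
      rw [h1, h2, hrow i] at hle
      have := hP i
      linarith
    · ext i
      simp only [Finset.mem_univ, Finset.mem_biUnion, Finset.mem_filter, true_and,
        true_iff]
      by_contra hcon
      push_neg at hcon
      have : ∑ j, S i j = 0 := Finset.sum_eq_zero (fun j _ => hcon j)
      rw [hrow i] at this
      exact (ne_of_gt (hP i)) this
    · intro r r'
      have key : ∀ s : Fin m,
          ((∑ j ∈ Finset.univ.filter (fun i => S i s ≠ 0), d j : ℕ) : ℝ) = c / m := by
        intro s
        have h1 : Q s = ∑ i ∈ Finset.univ.filter (fun i => S i s ≠ 0), S i s := by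
          rw [hQ_def]
          simp only [colMarginal]
          rw [Finset.sum_filter_ne_zero]
        have h2 : ∑ i ∈ Finset.univ.filter (fun i => S i s ≠ 0), S i s =
            ∑ i ∈ Finset.univ.filter (fun i => S i s ≠ 0), P i :=
          Finset.sum_congr rfl (fun i hi =>
            (hdet i s).resolve_left (Finset.mem_filter.mp hi).2)
        have h3 : ∑ i ∈ Finset.univ.filter (fun i => S i s ≠ 0), P i =
            (∑ i ∈ Finset.univ.filter (fun i => S i s ≠ 0), (d i : ℝ)) / c := by
          simp only [hP_def]
          rw [← Finset.sum_div]
        have h4 := hQuni s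
        rw [h1, h2, h3] at h4
        push_cast
        rw [eq_div_iff (ne_of_gt hmR)]
        rw [div_eq_div_iff (ne_of_gt hc) (ne_of_gt hmR)] at h4
        linarith [h4]
      have := (key r).trans (key r').symm
      exact_mod_cast this
end

section
/- Let r ∈ ℤ^n and c ∈ ℤ^m be vectors of nonnegative integers with ∑_i r_i = ∑_j c_j, and let T(r,c) be the set of n×m matrices with nonnegative real entries whose i-th row sums to r_i for every i and whose j-th column sums to c_j for every j. Then every extreme point of the convex set T(r,c) has all entries in ℤ. -/
open Finset

set_option maxHeartbeats 1600000

private lemma isInt_sum' {α : Type*} (s : Finset α) (f : α → ℝ)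
    (h : ∀ a ∈ s, ∃ z : ℤ, f a = (z : ℝ)) :
    ∃ z : ℤ, ∑ a ∈ s, f a = (z : ℝ) := by
  classical
  induction s using Finset.induction with
  | empty => exact ⟨0, by simp⟩
  | @insert b t hb ih =>
    obtain ⟨z, hz⟩ := h _ (Finset.mem_insert_self _ _)
    obtain ⟨w, hw⟩ := ih (fun a ha => h a (Finset.mem_insert_of_mem ha))
    exact ⟨z + w, by rw [Finset.sum_insert hb, hz, hw]; push_cast; ring⟩

/-- every extreme point of the transportation polytope of nonnegative
real `n × m` matrices with prescribed nonnegative integer row sums `r` and column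
sums `c` (with `∑ r = ∑ c`) has all entries integral. -/
theorem extreme_points_of_integer_transportation_polytope_are_integral
    {n m : ℕ} (r : Fin n → ℤ) (c : Fin m → ℤ)
    (hr : ∀ i, 0 ≤ r i) (hc : ∀ j, 0 ≤ c j)
    (hrc : ∑ i, r i = ∑ j, c j)
    (A : Fin n → Fin m → ℝ)
    (hA : A ∈ Set.extremePoints ℝ
      {S : Fin n → Fin m → ℝ |
        (∀ i j, 0 ≤ S i j) ∧
        (∀ i, ∑ j, S i j = (r i : ℝ)) ∧
        (∀ j, ∑ i, S i j = (c j : ℝ))}) :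
    ∀ i j, ∃ z : ℤ, A i j = (z : ℝ) := by
  classical
  obtain ⟨hS0, hSrow, hScol⟩ := hA.1
  by_contra hcon
  push_neg at hcon
  obtain ⟨i0, j0, hij0⟩ := hcon
  -- the set of non-integral entries
  set E : Finset (Fin n × Fin m) :=
    Finset.univ.filter (fun p => ¬ ∃ z : ℤ, A p.1 p.2 = (z : ℝ)) with hEdef
  have hE : E.Nonempty := ⟨(i0, j0), by
    simp only [hEdef, Finset.mem_filter, Finset.mem_univ, true_and]
    exact fun ⟨z, hz⟩ => hij0 z hz⟩
  set R : Finset (Fin n) := E.image Prod.fst with hRdef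
  set C : Finset (Fin m) := E.image Prod.snd with hCdef
  -- every touched row has at least two non-integral entries
  have hrow2 : ∀ i ∈ R, 2 ≤ (E.filter (fun p => p.1 = i)).card := by
    intro i hi
    obtain ⟨p, hpE, hpi⟩ := Finset.mem_image.mp hi
    have h1 : (E.filter (fun p => p.1 = i)).Nonempty :=
      ⟨p, Finset.mem_filter.mpr ⟨hpE, hpi⟩⟩
    by_contra h
    push_neg at h
    have hcard : (E.filter (fun p => p.1 = i)).card = 1 :=
      le_antisymm (Nat.lt_succ_iff.mp h) (Finset.card_pos.mpr h1)
    obtain ⟨q, hq⟩ := Finset.card_eq_one.mp hcard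
    have hqmem : q ∈ E.filter (fun p => p.1 = i) := hq ▸ Finset.mem_singleton_self q
    have hqE : q ∈ E := (Finset.mem_filter.mp hqmem).1
    have hq1 : q.1 = i := (Finset.mem_filter.mp hqmem).2
    have hint : ∀ j, j ≠ q.2 → ∃ z : ℤ, A i j = (z : ℝ) := by
      intro j hj
      by_contra hnot
      have hmem : (i, j) ∈ E.filter (fun p => p.1 = i) :=
        Finset.mem_filter.mpr ⟨Finset.mem_filter.mpr ⟨Finset.mem_univ _, hnot⟩, rfl⟩
      rw [hq, Finset.mem_singleton] at hmem
      exact hj (congrArg Prod.snd hmem)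
    obtain ⟨w, hw⟩ := isInt_sum' (Finset.univ.erase q.2) (A i)
      (fun j hj => hint j (Finset.ne_of_mem_erase hj))
    have hsum : ∑ j ∈ Finset.univ.erase q.2, A i j + A i q.2 = ∑ j, A i j :=
      Finset.sum_erase_add _ _ (Finset.mem_univ _)
    have hAval : A i q.2 = ((r i - w : ℤ) : ℝ) := by
      have := hSrow i
      push_cast
      linarith [hsum, hw]
    have : ¬ ∃ z : ℤ, A q.1 q.2 = (z : ℝ) := (Finset.mem_filter.mp hqE).2
    exact this ⟨r i - w, by rw [hq1]; exact hAval⟩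
  -- every touched column has at least two non-integral entries
  have hcol2 : ∀ j ∈ C, 2 ≤ (E.filter (fun p => p.2 = j)).card := by
    intro j hj
    obtain ⟨p, hpE, hpj⟩ := Finset.mem_image.mp hj
    have h1 : (E.filter (fun p => p.2 = j)).Nonempty :=
      ⟨p, Finset.mem_filter.mpr ⟨hpE, hpj⟩⟩
    by_contra h
    push_neg at h
    have hcard : (E.filter (fun p => p.2 = j)).card = 1 :=
      le_antisymm (Nat.lt_succ_iff.mp h) (Finset.card_pos.mpr h1)
    obtain ⟨q, hq⟩ := Finset.card_eq_one.mp hcard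
    have hqmem : q ∈ E.filter (fun p => p.2 = j) := hq ▸ Finset.mem_singleton_self q
    have hqE : q ∈ E := (Finset.mem_filter.mp hqmem).1
    have hq2 : q.2 = j := (Finset.mem_filter.mp hqmem).2
    have hint : ∀ i, i ≠ q.1 → ∃ z : ℤ, A i j = (z : ℝ) := by
      intro i hi
      by_contra hnot
      have hmem : (i, j) ∈ E.filter (fun p => p.2 = j) :=
        Finset.mem_filter.mpr ⟨Finset.mem_filter.mpr ⟨Finset.mem_univ _, hnot⟩, rfl⟩
      rw [hq, Finset.mem_singleton] at hmem
      exact hi (by rw [← hmem])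
    obtain ⟨w, hw⟩ := isInt_sum' (Finset.univ.erase q.1) (fun i => A i j)
      (fun i hi => hint i (Finset.ne_of_mem_erase hi))
    have hsum : ∑ i ∈ Finset.univ.erase q.1, A i j + A q.1 j = ∑ i, A i j :=
      Finset.sum_erase_add _ _ (Finset.mem_univ _)
    have hAval : A q.1 j = ((c j - w : ℤ) : ℝ) := by
      have := hScol j
      push_cast
      linarith [hsum, hw]
    have : ¬ ∃ z : ℤ, A q.1 q.2 = (z : ℝ) := (Finset.mem_filter.mp hqE).2
    exact this ⟨c j - w, by rw [hq2]; exact hAval⟩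
  -- counting : |R| + |C| ≤ |E|
  have hcardR : E.card = ∑ i ∈ R, (E.filter (fun p => p.1 = i)).card :=
    Finset.card_eq_sum_card_fiberwise (fun p hp => Finset.mem_image_of_mem _ hp)
  have hcardC : E.card = ∑ j ∈ C, (E.filter (fun p => p.2 = j)).card :=
    Finset.card_eq_sum_card_fiberwise (fun p hp => Finset.mem_image_of_mem _ hp)
  have h2R : 2 * R.card ≤ E.card := by
    calc 2 * R.card = ∑ _i ∈ R, 2 := by rw [Finset.sum_const, smul_eq_mul, mul_comm]
      _ ≤ ∑ i ∈ R, (E.filter (fun p => p.1 = i)).card := Finset.sum_le_sum hrow2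
      _ = E.card := hcardR.symm
  have h2C : 2 * C.card ≤ E.card := by
    calc 2 * C.card = ∑ _j ∈ C, 2 := by rw [Finset.sum_const, smul_eq_mul, mul_comm]
      _ ≤ ∑ j ∈ C, (E.filter (fun p => p.2 = j)).card := Finset.sum_le_sum hcol2
      _ = E.card := hcardC.symm
  have hRC : R.card + C.card ≤ E.card := by omega
  have hRne : R.Nonempty := hE.image _
  -- the linear map recording row and column sums of a vector supported on E
  set φ : (↥E → ℝ) →ₗ[ℝ] ((↥R → ℝ) × (↥C → ℝ)) :=
    { toFun := fun x =>
        (fun i => ∑ e : ↥E, if (e : Fin n × Fin m).1 = (i : Fin n) then x e else 0,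
         fun j => ∑ e : ↥E, if (e : Fin n × Fin m).2 = (j : Fin m) then x e else 0)
      map_add' := by
        intro x y
        refine Prod.ext ?_ ?_ <;> funext i <;>
          simp only [Pi.add_apply, Prod.fst_add, Prod.snd_add, ← Finset.sum_add_distrib] <;>
          exact Finset.sum_congr rfl (fun e _ => by split <;> simp)
      map_smul' := by
        intro t x
        refine Prod.ext ?_ ?_ <;> funext i <;>
          simp only [Pi.smul_apply, Prod.smul_fst, Prod.smul_snd, smul_eq_mul,
            RingHom.id_apply, Finset.mul_sum] <;>
          exact Finset.sum_congr rfl (fun e _ => by split <;> simp) } with hφdef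
  set L : ((↥R → ℝ) × (↥C → ℝ)) →ₗ[ℝ] ℝ :=
    { toFun := fun uv => ∑ i : ↥R, uv.1 i - ∑ j : ↥C, uv.2 j
      map_add' := by
        intro u v
        simp [Finset.sum_add_distrib]
        ring
      map_smul' := by
        intro t u
        simp only [Prod.smul_fst, Prod.smul_snd, Pi.smul_apply, smul_eq_mul,
          RingHom.id_apply]
        rw [mul_sub, Finset.mul_sum, Finset.mul_sum] } with hLdef
  have hrange : LinearMap.range φ ≤ LinearMap.ker L := by
    rintro w ⟨x, rfl⟩
    have key1 : ∑ i : ↥R, ∑ e : ↥E,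
        (if (e : Fin n × Fin m).1 = (i : Fin n) then x e else 0) = ∑ e : ↥E, x e := by
      rw [Finset.sum_comm]
      refine Finset.sum_congr rfl (fun e _ => ?_)
      have : ∑ i : ↥R, (if (e : Fin n × Fin m).1 = (i : Fin n) then x e else 0)
          = ∑ i ∈ R, (if (e : Fin n × Fin m).1 = i then x e else 0) :=
        Finset.sum_coe_sort R (fun i => if (e : Fin n × Fin m).1 = i then x e else 0)
      rw [this, Finset.sum_ite_eq,
        if_pos (Finset.mem_image_of_mem Prod.fst e.2)]
    have key2 : ∑ j : ↥C, ∑ e : ↥E,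
        (if (e : Fin n × Fin m).2 = (j : Fin m) then x e else 0) = ∑ e : ↥E, x e := by
      rw [Finset.sum_comm]
      refine Finset.sum_congr rfl (fun e _ => ?_)
      have : ∑ j : ↥C, (if (e : Fin n × Fin m).2 = (j : Fin m) then x e else 0)
          = ∑ j ∈ C, (if (e : Fin n × Fin m).2 = j then x e else 0) :=
        Finset.sum_coe_sort C (fun j => if (e : Fin n × Fin m).2 = j then x e else 0)
      rw [this, Finset.sum_ite_eq,
        if_pos (Finset.mem_image_of_mem Prod.snd e.2)]
    simp only [LinearMap.mem_ker, hLdef, hφdef, LinearMap.coe_mk, AddHom.coe_mk]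
    rw [key1, key2, sub_self]
  -- the kernel of φ is nontrivial
  have hkerφ : LinearMap.ker φ ≠ ⊥ := by
    intro hbot
    have hrn := LinearMap.finrank_range_add_finrank_ker φ
    rw [hbot, finrank_bot, add_zero, Module.finrank_fintype_fun_eq_card,
      Fintype.card_coe] at hrn
    have hLne : LinearMap.ker L ≠ ⊤ := by
      intro htop
      have h1 : L ((fun _ => 1), (fun _ => 0)) = 0 := by
        rw [← LinearMap.mem_ker, htop]; trivial
      have h0 : L ((fun _ => 1), (fun _ => 0)) = (R.card : ℝ) := by
        simp [hLdef, Finset.sum_const, Finset.card_univ, Fintype.card_coe]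
      rw [h0] at h1
      exact (Nat.cast_pos.mpr (Finset.card_pos.mpr hRne)).ne' h1
    have hlt1 : Module.finrank ℝ ↥(LinearMap.ker L)
        < Module.finrank ℝ ((↥R → ℝ) × (↥C → ℝ)) :=
      Submodule.finrank_lt hLne
    have hdim : Module.finrank ℝ ((↥R → ℝ) × (↥C → ℝ)) = R.card + C.card := by
      rw [Module.finrank_prod, Module.finrank_fintype_fun_eq_card,
        Module.finrank_fintype_fun_eq_card, Fintype.card_coe, Fintype.card_coe]
    have hle : Module.finrank ℝ ↥(LinearMap.range φ)
        ≤ Module.finrank ℝ ↥(LinearMap.ker L) := Submodule.finrank_mono hrange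
    omega
  obtain ⟨x, hxker, hxne⟩ := (Submodule.ne_bot_iff _).mp hkerφ
  -- the perturbation matrix
  set y : Fin n × Fin m → ℝ := fun p => if h : p ∈ E then x ⟨p, h⟩ else 0 with hydef
  have hy_notE : ∀ p ∉ E, y p = 0 := fun p hp => dif_neg hp
  have hy_e : ∀ e : ↥E, y (e : Fin n × Fin m) = x e := fun e => by
    simp [hydef, e.2]
  have hφx : φ x = 0 := hxker
  have hrowx : ∀ i : ↥R,
      ∑ e : ↥E, (if (e : Fin n × Fin m).1 = (i : Fin n) then x e else 0) = 0 :=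
    fun i => congrFun (congrArg Prod.fst hφx) i
  have hcolx : ∀ j : ↥C,
      ∑ e : ↥E, (if (e : Fin n × Fin m).2 = (j : Fin m) then x e else 0) = 0 :=
    fun j => congrFun (congrArg Prod.snd hφx) j
  -- row and column sums of y vanish
  have hrowy : ∀ i, ∑ j, y (i, j) = 0 := by
    intro i
    by_cases hi : i ∈ R
    · have h1 := hrowx ⟨i, hi⟩
      have h2 : ∑ e : ↥E, (if (e : Fin n × Fin m).1 = i then x e else 0)
          = ∑ p ∈ E, (if p.1 = i then y p else 0) := by
        rw [← Finset.sum_coe_sort E (fun p => if p.1 = i then y p else 0)]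
        exact Finset.sum_congr rfl (fun e _ => by rw [hy_e e])
      have h3 : ∑ p ∈ E, (if p.1 = i then y p else 0)
          = ∑ p : Fin n × Fin m, (if p.1 = i then y p else 0) := by
        refine Finset.sum_subset (Finset.subset_univ E) (fun p _ hpE => ?_)
        rw [hy_notE p hpE]; simp
      have h4 : ∑ p : Fin n × Fin m, (if p.1 = i then y p else 0) = ∑ j, y (i, j) := by
        rw [Fintype.sum_prod_type, Finset.sum_comm]
        refine Finset.sum_congr rfl (fun b _ => ?_)
        rw [Finset.sum_ite_eq', if_pos (Finset.mem_univ i)]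
      rw [← h4, ← h3, ← h2, h1]
    · refine Finset.sum_eq_zero (fun j _ => hy_notE _ (fun hmem => ?_))
      exact hi (Finset.mem_image_of_mem Prod.fst hmem)
  have hcoly : ∀ j, ∑ i, y (i, j) = 0 := by
    intro j
    by_cases hj : j ∈ C
    · have h1 := hcolx ⟨j, hj⟩
      have h2 : ∑ e : ↥E, (if (e : Fin n × Fin m).2 = j then x e else 0)
          = ∑ p ∈ E, (if p.2 = j then y p else 0) := by
        rw [← Finset.sum_coe_sort E (fun p => if p.2 = j then y p else 0)]
        exact Finset.sum_congr rfl (fun e _ => by rw [hy_e e])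
      have h3 : ∑ p ∈ E, (if p.2 = j then y p else 0)
          = ∑ p : Fin n × Fin m, (if p.2 = j then y p else 0) := by
        refine Finset.sum_subset (Finset.subset_univ E) (fun p _ hpE => ?_)
        rw [hy_notE p hpE]; simp
      have h4 : ∑ p : Fin n × Fin m, (if p.2 = j then y p else 0) = ∑ i, y (i, j) := by
        rw [Fintype.sum_prod_type]
        refine Finset.sum_congr rfl (fun a _ => ?_)
        rw [Finset.sum_ite_eq', if_pos (Finset.mem_univ j)]
      rw [← h4, ← h3, ← h2, h1]
    · refine Finset.sum_eq_zero (fun i _ => hy_notE _ (fun hmem => ?_))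
      exact hj (Finset.mem_image_of_mem Prod.snd hmem)
  -- entries of A are positive on E
  have hApos : ∀ p ∈ E, 0 < A p.1 p.2 := by
    intro p hp
    rcases (hS0 p.1 p.2).lt_or_eq with h | h
    · exact h
    · exact absurd ⟨0, by rw [← h]; norm_num⟩ (Finset.mem_filter.mp hp).2
  -- choose a perturbation size
  set a : ℝ := E.inf' hE (fun p => A p.1 p.2) with hadef
  have ha : 0 < a := (Finset.lt_inf'_iff hE).mpr hApos
  set M : ℝ := E.sup' hE (fun p => |y p|) with hMdef
  have hM0 : 0 ≤ M := by
    obtain ⟨p1, hp1⟩ := hE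
    exact le_trans (abs_nonneg (y p1)) (Finset.le_sup' (fun p => |y p|) hp1)
  set ε : ℝ := a / (M + 1) with hεdef
  have hε : 0 < ε := div_pos ha (by linarith)
  have hbound : ∀ i j, ε * |y (i, j)| ≤ A i j := by
    intro i j
    by_cases h : (i, j) ∈ E
    · have h1 : |y (i, j)| ≤ M := Finset.le_sup' (fun p => |y p|) h
      have h2 : a ≤ A i j := Finset.inf'_le (fun p => A p.1 p.2) h
      have h3 : ε * |y (i, j)| ≤ ε * M := mul_le_mul_of_nonneg_left h1 hε.le
      have h4 : ε * M ≤ a := by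
        rw [hεdef, div_mul_eq_mul_div, div_le_iff₀ (by linarith : (0:ℝ) < M + 1)]
        nlinarith
      linarith
    · rw [hy_notE _ h]
      simpa using hS0 i j
  -- the two perturbed matrices
  set B₁ : Fin n → Fin m → ℝ := fun i j => A i j + ε * y (i, j) with hB₁def
  set B₂ : Fin n → Fin m → ℝ := fun i j => A i j - ε * y (i, j) with hB₂def
  have hy_abs : ∀ i j, -A i j ≤ ε * y (i, j) ∧ ε * y (i, j) ≤ A i j := by
    intro i j
    have h1 := hbound i j
    have h2 : ε * y (i, j) ≤ ε * |y (i, j)| :=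
      mul_le_mul_of_nonneg_left (le_abs_self _) hε.le
    have h3 : -(ε * |y (i, j)|) ≤ ε * y (i, j) := by
      rw [← mul_neg]
      exact mul_le_mul_of_nonneg_left (neg_abs_le _) hε.le
    constructor <;> linarith
  have hB₁mem : B₁ ∈ {S : Fin n → Fin m → ℝ |
      (∀ i j, 0 ≤ S i j) ∧ (∀ i, ∑ j, S i j = (r i : ℝ)) ∧
      (∀ j, ∑ i, S i j = (c j : ℝ))} := by
    refine ⟨fun i j => by have := (hy_abs i j).1; simp only [hB₁def]; linarith, ?_, ?_⟩
    · intro i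
      simp only [hB₁def]
      rw [Finset.sum_add_distrib, ← Finset.mul_sum, hrowy i, mul_zero, add_zero]
      exact hSrow i
    · intro j
      simp only [hB₁def]
      rw [Finset.sum_add_distrib, ← Finset.mul_sum, hcoly j, mul_zero, add_zero]
      exact hScol j
  have hB₂mem : B₂ ∈ {S : Fin n → Fin m → ℝ |
      (∀ i j, 0 ≤ S i j) ∧ (∀ i, ∑ j, S i j = (r i : ℝ)) ∧
      (∀ j, ∑ i, S i j = (c j : ℝ))} := by
    refine ⟨fun i j => by have := (hy_abs i j).2; simp only [hB₂def]; linarith, ?_, ?_⟩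
    · intro i
      simp only [hB₂def]
      rw [Finset.sum_sub_distrib, ← Finset.mul_sum, hrowy i, mul_zero, sub_zero]
      exact hSrow i
    · intro j
      simp only [hB₂def]
      rw [Finset.sum_sub_distrib, ← Finset.mul_sum, hcoly j, mul_zero, sub_zero]
      exact hScol j
  have hseg : A ∈ openSegment ℝ B₁ B₂ := by
    refine ⟨1/2, 1/2, by norm_num, by norm_num, by norm_num, ?_⟩
    funext i
    funext j
    simp only [Pi.add_apply, Pi.smul_apply, smul_eq_mul, hB₁def, hB₂def]
    ring
  have hB1A := hA.2 hB₁mem hB₂mem hseg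
  obtain ⟨e0, hx0⟩ := Function.ne_iff.mp hxne
  have hy0 : y (e0 : Fin n × Fin m) ≠ 0 := by rw [hy_e e0]; exact hx0
  have : B₁ (e0 : Fin n × Fin m).1 (e0 : Fin n × Fin m).2
      = A (e0 : Fin n × Fin m).1 (e0 : Fin n × Fin m).2 := by rw [hB1A]
  simp only [hB₁def] at this
  have : ε * y (e0 : Fin n × Fin m) = 0 := by linarith [this]
  exact hy0 ((mul_eq_zero.mp this).resolve_left hε.ne')
end
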